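/- arXiv:2004.09155 — 6 statements merged into one kernel-verified Lean document; each statement's English description precedes it below -/
import Mathlib

section
/- For any prime p > 5 with p ≡ 1 (mod 5), H_{(p-1)/2} + H_{(p-1)/5} - H_{3(p-1)/10} ≡ -5·f_p (mod p), where H_n = ∑_{k=1}^n 1/k and f_p = F_{p-1}/p is the Fibonacci quotient. -/
open Finset

/-- Binet-style identity in any commutative ring. -/
lemma my_binet {R : Type*} [CommRing R] (a b : R) (h1 : a + b = 1) (h2 : a * b = -1) :
    ∀ n : ℕ, (a - b) * (Nat.fib n : R) = a ^ n - b ^ n := by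
  have ha : a ^ 2 = a + 1 := by linear_combination a * h1 - h2
  have hb : b ^ 2 = b + 1 := by linear_combination b * h1 - h2
  intro n
  induction n using Nat.twoStepInduction with
  | zero => simp
  | one => simp
  | more n ih1 ih2 =>
    rw [Nat.fib_add_two]
    push_cast
    linear_combination ih1 + ih2 - a ^ n * ha + b ^ n * hb
    
/-- (1+t)^n = 1 + n t when t^2 = 0. -/
lemma my_pow_one_add {R : Type*} [CommRing R] (t : R) (ht : t * t = 0) (n : ℕ) :
    (1 + t) ^ n = 1 + n * t := by
  induction n with
  | zero => simp
  | succ n ih =>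
    rw [pow_succ, ih]
    push_cast
    ring_nf
    linear_combination (n : R) * ht

/-- Frobenius binomial expansion. -/
lemma my_add_pow_prime {R : Type*} [CommRing R] {p : ℕ} (hp : p.Prime) (x y : R) :
    (x + y) ^ p = x ^ p + y ^ p
      + (p : R) * ∑ k ∈ Finset.Ico 1 p, ((p.choose k / p : ℕ) : R) * (x ^ k * y ^ (p - k)) := by
  have hpos : 0 < p := hp.pos
  rw [add_pow]
  rw [show Finset.range (p + 1) = insert p (Finset.Ico 0 p) by
    rw [Finset.range_eq_Ico, Nat.Ico_succ_right_eq_insert_Ico (Nat.zero_le p)]]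
  rw [Finset.sum_insert (by simp)]
  rw [show Finset.Ico 0 p = insert 0 (Finset.Ico 1 p) by
    ext j; simp only [Finset.mem_Ico, Finset.mem_insert]; omega]
  rw [Finset.sum_insert (by simp)]
  simp only [Nat.sub_self, pow_zero, Nat.choose_self, Nat.cast_one, mul_one, Nat.choose_zero_right,
    Nat.sub_zero, one_mul]
  rw [Finset.mul_sum]
  have : ∀ k ∈ Finset.Ico 1 p, x ^ k * y ^ (p - k) * (p.choose k : R)
      = (p : R) * (((p.choose k / p : ℕ) : R) * (x ^ k * y ^ (p - k))) := by
    intro k hk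
    simp only [Finset.mem_Ico] at hk
    have hdvd : p ∣ p.choose k := hp.dvd_choose_self (by omega) hk.2
    rw [show ((p.choose k : ℕ) : R) = (p : R) * ((p.choose k / p : ℕ) : R) by
      rw [← Nat.cast_mul, Nat.mul_div_cancel' hdvd]]
    ring
  rw [Finset.sum_congr rfl this]
  ring

section Part2
variable {p : ℕ} [hpf : Fact p.Prime]

lemma my_choose_sub_one {k : ℕ} (hk : k < p) :
    (((p - 1).choose k : ℕ) : ZMod p) = (-1) ^ k := by
  induction k with
  | zero => simp
  | succ k ih =>
    have hk' : k < p := by omega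
    have hps : p - 1 + 1 = p := Nat.succ_pred_eq_of_pos hpf.out.pos
    have hcs : (p - 1).choose k + (p - 1).choose (k + 1) = p.choose (k + 1) := by
      have := Nat.choose_succ_succ (p - 1) k
      simp only [Nat.succ_eq_add_one, hps] at this
      omega
    have hdvd : p ∣ p.choose (k + 1) := hpf.out.dvd_choose_self (by omega) hk
    have h0 : ((p.choose (k + 1) : ℕ) : ZMod p) = 0 :=
      (ZMod.natCast_eq_zero_iff _ _).mpr hdvd
    have hc := congrArg (fun m : ℕ => (m : ZMod p)) hcs
    simp only [Nat.cast_add] at hc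
    rw [h0, ih hk'] at hc
    linear_combination hc

lemma my_d_mul {k : ℕ} (hk1 : 1 ≤ k) (hk : k < p) :
    ((p.choose k / p : ℕ) : ZMod p) * (k : ZMod p) = (-1) ^ (k - 1) := by
  have hdvd : p ∣ p.choose k := hpf.out.dvd_choose_self (by omega) hk
  have hnat : p.choose k / p * k = (p - 1).choose (k - 1) := by
    have h1 : p - 1 + 1 = p := Nat.succ_pred_eq_of_pos hpf.out.pos
    have h2 : k - 1 + 1 = k := Nat.succ_pred_eq_of_pos hk1
    have := Nat.add_one_mul_choose_eq (p - 1) (k - 1)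
    simp only [Nat.succ_eq_add_one, h1, h2] at this
    -- this : p * (p-1).choose (k-1) = p.choose k * k
    have h3 : p.choose k * k = p * (p.choose k / p * k) := by
      rw [← mul_assoc, Nat.mul_div_cancel' hdvd]
    exact (Nat.eq_of_mul_eq_mul_left hpf.out.pos (this.trans h3)).symm
  rw [← Nat.cast_mul, hnat, my_choose_sub_one (by omega)]

variable (p) in
abbrev myPi : ZMod (p ^ 2) →+* ZMod p :=
  ZMod.castHom (dvd_pow_self p (by norm_num)) (ZMod p)

lemma my_neZero_sq : NeZero (p ^ 2) := ⟨pow_ne_zero 2 hpf.out.pos.ne'⟩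

lemma my_pi_eq (x : ZMod (p ^ 2)) : myPi p x = ((x.val : ℕ) : ZMod p) := by
  haveI := @my_neZero_sq p _
  rw [ZMod.castHom_apply, ← ZMod.natCast_val]

lemma my_self_eq_val (x : ZMod (p ^ 2)) : ((x.val : ℕ) : ZMod (p ^ 2)) = x := by
  haveI := @my_neZero_sq p _
  rw [ZMod.natCast_val, ZMod.cast_id]

lemma my_unit_lift (x : ZMod (p ^ 2)) (hx : myPi p x ≠ 0) : IsUnit x := by
  haveI := @my_neZero_sq p _
  have h1 : ¬ (p ∣ x.val) := by
    intro hdvd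
    exact hx (by rw [my_pi_eq]; exact (ZMod.natCast_eq_zero_iff _ _).mpr hdvd)
  rw [← my_self_eq_val x]
  rw [ZMod.isUnit_iff_coprime]
  exact (Nat.coprime_pow_right_iff (by norm_num : 0 < 2) _ _).mpr
    (Nat.coprime_comm.mp (hpf.out.coprime_iff_not_dvd.mpr h1))

lemma my_pmul_zero (x : ZMod (p ^ 2)) (h : (p : ZMod (p ^ 2)) * x = 0) : myPi p x = 0 := by
  haveI := @my_neZero_sq p _
  have h1 : ((p * x.val : ℕ) : ZMod (p ^ 2)) = 0 := by
    push_cast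
    rw [my_self_eq_val x]; exact h
  have h2 : p ^ 2 ∣ p * x.val := (ZMod.natCast_eq_zero_iff _ _).mp h1
  have h3 : p ∣ x.val := by
    rcases h2 with ⟨c, hc⟩
    have : x.val = p * c := by
      have hp0 : 0 < p := hpf.out.pos
      have : p * x.val = p * (p * c) := by rw [hc]; ring
      exact Nat.eq_of_mul_eq_mul_left hp0 this
    exact ⟨c, this⟩
  rw [my_pi_eq]
  exact (ZMod.natCast_eq_zero_iff _ _).mpr h3

lemma my_factor_p (x : ZMod (p ^ 2)) (h : myPi p x = 0) :
    ∃ c : ZMod (p ^ 2), x = (p : ZMod (p ^ 2)) * c := by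
  haveI := @my_neZero_sq p _
  rw [my_pi_eq] at h
  rcases (ZMod.natCast_eq_zero_iff _ _).mp h with ⟨t, ht⟩
  exact ⟨(t : ZMod (p ^ 2)), by rw [← my_self_eq_val x, ht]; push_cast; ring⟩

omit hpf in
lemma my_p_sq_zero : (p : ZMod (p ^ 2)) * (p : ZMod (p ^ 2)) = 0 := by
  have : ((p ^ 2 : ℕ) : ZMod (p ^ 2)) = 0 := ZMod.natCast_self _
  push_cast at this
  linear_combination this

lemma my_pow_p_eq_one (x : ZMod (p ^ 2)) (h : myPi p x = 1) : x ^ p = 1 := by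
  obtain ⟨c, hc⟩ := my_factor_p (x - 1) (by rw [map_sub, map_one, h, sub_self])
  have hx : x = 1 + (p : ZMod (p ^ 2)) * c := by linear_combination hc
  have ht : ((p : ZMod (p ^ 2)) * c) * ((p : ZMod (p ^ 2)) * c) = 0 := by
    have := my_p_sq_zero (p := p)
    linear_combination c * c * this
  rw [hx, my_pow_one_add _ ht]
  have := my_p_sq_zero (p := p)
  linear_combination c * this

end Part2

lemma my_pow_mod {M : Type*} [Monoid M] (x : M) (h : x ^ 5 = 1) (a : ℕ) :
    x ^ a = x ^ (a % 5) := by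
  conv_lhs => rw [← Nat.div_add_mod a 5]
  rw [pow_add, pow_mul, h, one_pow, one_mul]

variable (p : ℕ) in
def Lsum (x : ZMod p) : ZMod p := ∑ k ∈ Finset.Ico 1 p, x ^ k * ((k : ℕ) : ZMod p)⁻¹

section Part3
variable {p : ℕ} [hpf : Fact p.Prime]

lemma my_sum_eval (η : ZMod p) (hη5 : η ^ 5 = 1) (a b c e : ℕ)
    (hmod : ∀ k, 1 ≤ k → k < p → (a * k + b * (p - k)) % 5 = (c + e * k) % 5) :
    ∑ k ∈ Finset.Ico 1 p, ((p.choose k / p : ℕ) : ZMod p) * ((η ^ a) ^ k * (η ^ b) ^ (p - k))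
      = -η ^ c * Lsum p (-η ^ e) := by
  rw [Lsum, Finset.mul_sum]
  apply Finset.sum_congr rfl
  intro k hk
  rw [Finset.mem_Ico] at hk
  obtain ⟨hk1, hk2⟩ := hk
  have hk0 : ((k : ℕ) : ZMod p) ≠ 0 := by
    rw [Ne, ZMod.natCast_eq_zero_iff]
    intro hd
    have := Nat.le_of_dvd (by omega) hd
    omega
  have e1 : (η ^ a) ^ k * (η ^ b) ^ (p - k) = η ^ c * (η ^ e) ^ k := by
    rw [← pow_mul, ← pow_mul, ← pow_add, my_pow_mod η hη5, hmod k hk1 hk2,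
      ← my_pow_mod η hη5, pow_add, pow_mul]
  have hdk := my_d_mul (p := p) hk1 hk2
  have e2 : ((p.choose k / p : ℕ) : ZMod p) = (-1) ^ (k - 1) * ((k : ℕ) : ZMod p)⁻¹ := by
    field_simp
    linear_combination hdk
  have e3 : (-η ^ e) ^ k = (-1) ^ k * (η ^ e) ^ k := by rw [neg_pow]
  have e4 : ((-1 : ZMod p)) ^ (k - 1) = -(-1) ^ k := by
    have h : ((-1 : ZMod p)) ^ k = (-1) ^ (k - 1) * (-1) := by rw [← pow_succ]; congr 1; omega
    linear_combination h
  rw [e1, e2, e3, e4]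
  ring

lemma my_core (hp5 : 5 < p) (h5 : p % 5 = 1) (ω : ZMod (p ^ 2)) (hw5 : ω ^ 5 = 1)
    (η : ZMod p) (hπ : myPi p ω = η) (hη : η ≠ 1) (hdvd : p ∣ Nat.fib (p - 1)) :
    (η ^ 2 + η ^ 3 - η - η ^ 4) * ((Nat.fib (p - 1) / p : ℕ) : ZMod p)
      = (η + η ^ 2) * Lsum p (-η ^ 2) - (η ^ 2 + η ^ 4) * Lsum p (-η ^ 4) := by
  have hppos : 0 < p := hpf.out.pos
  -- sum of powers of ω vanishes
  have hunit : IsUnit (ω - 1) := by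
    apply my_unit_lift
    rw [map_sub, map_one, hπ]
    exact sub_ne_zero_of_ne hη
  have hsum : 1 + ω + ω ^ 2 + ω ^ 3 + ω ^ 4 = 0 := by
    have h0 : (ω - 1) * (1 + ω + ω ^ 2 + ω ^ 3 + ω ^ 4) = 0 := by linear_combination hw5
    exact (hunit.mul_right_eq_zero).mp h0
  set α : ZMod (p ^ 2) := -(ω + ω ^ 4) with hα
  set β : ZMod (p ^ 2) := -(ω ^ 2 + ω ^ 3) with hβ
  have hab : α + β = 1 := by rw [hα, hβ]; linear_combination -hsum
  have hm : α * β = -1 := by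
    rw [hα, hβ]; linear_combination (ω + ω ^ 2) * hw5 + hsum
  have hwp : ω ^ p = ω := by
    have hp51 : 5 * (p / 5) + 1 = p := by omega
    have h : ω ^ (5 * (p / 5) + 1) = ω := by
      rw [pow_succ ω (5 * (p / 5)), pow_mul ω 5 (p / 5), hw5, one_pow, one_mul]
    rwa [hp51] at h
  have hwp2 : (ω ^ 2) ^ p = ω ^ 2 := by rw [← pow_mul ω 2 p, mul_comm 2 p, pow_mul ω p 2, hwp]
  have hwp3 : (ω ^ 3) ^ p = ω ^ 3 := by rw [← pow_mul ω 3 p, mul_comm 3 p, pow_mul ω p 3, hwp]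
  have hwp4 : (ω ^ 4) ^ p = ω ^ 4 := by rw [← pow_mul ω 4 p, mul_comm 4 p, pow_mul ω p 4, hwp]
  set U : ZMod (p ^ 2) :=
    ∑ k ∈ Finset.Ico 1 p, ((p.choose k / p : ℕ) : ZMod (p ^ 2)) * (ω ^ k * (ω ^ 4) ^ (p - k))
    with hU
  set V : ZMod (p ^ 2) :=
    ∑ k ∈ Finset.Ico 1 p, ((p.choose k / p : ℕ) : ZMod (p ^ 2)) * ((ω ^ 2) ^ k * (ω ^ 3) ^ (p - k))
    with hV
  have hodd : Odd p := hpf.out.odd_of_ne_two (by omega)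
  have hαp : α ^ p = α - (p : ZMod (p ^ 2)) * U := by
    rw [hα, Odd.neg_pow hodd, my_add_pow_prime hpf.out ω (ω ^ 4), hwp, hwp4]
    ring
  have hβp : β ^ p = β - (p : ZMod (p ^ 2)) * V := by
    rw [hβ, Odd.neg_pow hodd, my_add_pow_prime hpf.out (ω ^ 2) (ω ^ 3), hwp2, hwp3]
    ring
  have b2 := my_binet α β hab hm p
  have b3 := my_binet α β hab hm (p + 1)
  have hcast3 : (Nat.fib (p + 1) : ZMod (p ^ 2))
      = (Nat.fib (p - 1) : ZMod (p ^ 2)) + (Nat.fib p : ZMod (p ^ 2)) := by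
    have e1 : p - 1 + 2 = p + 1 := by omega
    have e2 : p - 1 + 1 = p := by omega
    have : Nat.fib (p + 1) = Nat.fib (p - 1) + Nat.fib p := by
      conv_lhs => rw [← e1]
      rw [Nat.fib_add_two, e2]
    exact_mod_cast congrArg (fun m : ℕ => (m : ZMod (p ^ 2))) this
  have key : (α - β) * (Nat.fib (p - 1) : ZMod (p ^ 2))
      = -(p : ZMod (p ^ 2)) * ((α - 1) * U - (β - 1) * V) := by
    have h1 : (α - β) * (Nat.fib (p - 1) : ZMod (p ^ 2))
        = α ^ p * α - β ^ p * β - (α ^ p - β ^ p) := by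
      calc (α - β) * (Nat.fib (p - 1) : ZMod (p ^ 2))
          = (α - β) * (Nat.fib (p + 1) : ZMod (p ^ 2))
            - (α - β) * (Nat.fib p : ZMod (p ^ 2)) := by rw [hcast3]; ring
        _ = (α ^ (p + 1) - β ^ (p + 1)) - (α ^ p - β ^ p) := by rw [b3, b2]
        _ = α ^ p * α - β ^ p * β - (α ^ p - β ^ p) := by simp only [pow_succ]
    rw [h1, hαp, hβp]
    linear_combination (α - β) * hab - hab - hsum
  -- divide by p
  have hfibcast : (Nat.fib (p - 1) : ZMod (p ^ 2))
      = (p : ZMod (p ^ 2)) * ((Nat.fib (p - 1) / p : ℕ) : ZMod (p ^ 2)) := by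
    rw [← Nat.cast_mul, Nat.mul_div_cancel' hdvd]
  have hzero : (p : ZMod (p ^ 2)) * ((α - β) * ((Nat.fib (p - 1) / p : ℕ) : ZMod (p ^ 2))
      + ((α - 1) * U - (β - 1) * V)) = 0 := by
    linear_combination key - (α - β) * hfibcast
  have hK := my_pmul_zero _ hzero
  -- push the projection inside
  simp only [map_add, map_mul, map_sub, map_one, map_natCast] at hK
  have hπα : myPi p α = -(η + η ^ 4) := by rw [hα, map_neg, map_add, map_pow, hπ]
  have hπβ : myPi p β = -(η ^ 2 + η ^ 3) := by rw [hβ, map_neg, map_add, map_pow, map_pow, hπ]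
  have hη5 : η ^ 5 = 1 := by rw [← hπ, ← map_pow, hw5, map_one]
  have hπU : myPi p U = -η ^ 4 * Lsum p (-η ^ 2) := by
    rw [hU, map_sum]
    have : ∀ k ∈ Finset.Ico 1 p,
        myPi p (((p.choose k / p : ℕ) : ZMod (p ^ 2)) * (ω ^ k * (ω ^ 4) ^ (p - k)))
        = ((p.choose k / p : ℕ) : ZMod p) * ((η ^ 1) ^ k * (η ^ 4) ^ (p - k)) := by
      intro k _
      rw [map_mul, map_natCast, map_mul, map_pow, map_pow, map_pow, hπ, pow_one]
    rw [Finset.sum_congr rfl this]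
    exact my_sum_eval η hη5 1 4 4 2 (by intro k h1 h2; omega)
  have hπV : myPi p V = -η ^ 3 * Lsum p (-η ^ 4) := by
    rw [hV, map_sum]
    have : ∀ k ∈ Finset.Ico 1 p,
        myPi p (((p.choose k / p : ℕ) : ZMod (p ^ 2)) * ((ω ^ 2) ^ k * (ω ^ 3) ^ (p - k)))
        = ((p.choose k / p : ℕ) : ZMod p) * ((η ^ 2) ^ k * (η ^ 3) ^ (p - k)) := by
      intro k _
      rw [map_mul, map_natCast, map_mul, map_pow, map_pow, map_pow, map_pow, hπ]
    rw [Finset.sum_congr rfl this]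
    exact my_sum_eval η hη5 2 3 3 4 (by intro k h1 h2; omega)
  have hsumK : 1 + η + η ^ 2 + η ^ 3 + η ^ 4 = 0 := by
    have h := congrArg (myPi p) hsum
    simp only [map_add, map_pow, map_one, map_zero, hπ] at h
    exact h
  rw [hπα, hπβ, hπU, hπV] at hK
  -- conclude by algebra using η ^ 5 = 1
  linear_combination hK + (Lsum p (-η ^ 4) - Lsum p (-η ^ 2)) * hsumK
    + ((1 + η) * Lsum p (-η ^ 4) - (1 + η ^ 3) * Lsum p (-η ^ 2)) * hη5
end Part3

/-- Even/odd splitting of a sum over `Ico 1 (2h+1)`. -/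
lemma my_split2 {M : Type*} [AddCommMonoid M] (f : ℕ → M) (h : ℕ) :
    ∑ k ∈ Finset.Ico 1 (2 * h + 1), f k
      = ∑ j ∈ Finset.range h, (f (2 * j + 1) + f (2 * j + 2)) := by
  induction h with
  | zero => simp
  | succ h ih =>
    rw [show 2 * (h + 1) + 1 = (2 * h + 2) + 1 by ring,
      Finset.sum_Ico_succ_top (by omega) f,
      show 2 * h + 2 = (2 * h + 1) + 1 by ring,
      Finset.sum_Ico_succ_top (by omega) f, ih, Finset.sum_range_succ, add_assoc]

/-- Five-fold splitting of a sum over `Ico 1 (5h+1)`. -/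
lemma my_split5 {M : Type*} [AddCommMonoid M] (f : ℕ → M) (h : ℕ) :
    ∑ k ∈ Finset.Ico 1 (5 * h + 1), f k
      = ∑ j ∈ Finset.range h,
          (f (5 * j + 1) + f (5 * j + 2) + f (5 * j + 3) + f (5 * j + 4) + f (5 * j + 5)) := by
  induction h with
  | zero => simp
  | succ h ih =>
    rw [show 5 * (h + 1) + 1 = (5 * h + 4) + 1 + 1 by ring,
      Finset.sum_Ico_succ_top (by omega) f,
      show 5 * h + 4 + 1 = (5 * h + 3) + 1 + 1 by ring,
      Finset.sum_Ico_succ_top (by omega) f,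
      show 5 * h + 3 + 1 = (5 * h + 2) + 1 + 1 by ring,
      Finset.sum_Ico_succ_top (by omega) f,
      show 5 * h + 2 + 1 = (5 * h + 1) + 1 + 1 by ring,
      Finset.sum_Ico_succ_top (by omega) f,
      show 5 * h + 1 + 1 = (5 * h) + 1 + 1 by ring,
      Finset.sum_Ico_succ_top (by omega) f, ih, Finset.sum_range_succ]
    have e1 : 5 * h + 1 + 1 = 5 * h + 2 := by ring
    have e2 : 5 * h + 2 + 1 = 5 * h + 3 := by ring
    have e3 : 5 * h + 3 + 1 = 5 * h + 4 := by ring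
    have e4 : 5 * h + 4 + 1 = 5 * h + 5 := by ring
    rw [e1, e2, e3, e4]
    abel

section Part4
variable {p : ℕ} [hpf : Fact p.Prime]

lemma my_cast_neg {a b : ℕ} (hab : a + b = p) :
    ((a : ℕ) : ZMod p) = -((b : ℕ) : ZMod p) := by
  have h : (((a + b) : ℕ) : ZMod p) = 0 := by rw [hab]; exact ZMod.natCast_self p
  push_cast at h
  linear_combination h

lemma my_inv_neg {a b : ℕ} (hab : a + b = p) :
    ((a : ℕ) : ZMod p)⁻¹ = -((b : ℕ) : ZMod p)⁻¹ := by
  rw [my_cast_neg hab, inv_neg]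

lemma my_inv_sum_zero (hp2 : 2 < p) :
    ∑ k ∈ Finset.Ico 1 p, ((k : ℕ) : ZMod p)⁻¹ = 0 := by
  have h2 : ((2 : ℕ) : ZMod p) ≠ 0 := by
    rw [Ne, ZMod.natCast_eq_zero_iff]
    intro hd
    have := Nat.le_of_dvd (by omega) hd
    omega
  set S := ∑ k ∈ Finset.Ico 1 p, ((k : ℕ) : ZMod p)⁻¹ with hS
  have hrefl : S = -S := by
    rw [hS, Finset.sum_Ico_eq_sum_range]
    conv_lhs => rw [← Finset.sum_range_reflect]
    rw [← Finset.sum_neg_distrib]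
    apply Finset.sum_congr rfl
    intro i hi
    rw [Finset.mem_range] at hi
    have e : 1 + (p - 1 - 1 - i) = p - (1 + i) := by omega
    rw [e, my_inv_neg (by omega : (p - (1 + i)) + (1 + i) = p)]
  have h2S : ((2 : ℕ) : ZMod p) * S = 0 := by push_cast; linear_combination hrefl
  rcases mul_eq_zero.mp h2S with h | h
  · exact absurd h h2
  · exact h

lemma my_Lsum_one (hp2 : 2 < p) : Lsum p 1 = 0 := by
  rw [Lsum, ← my_inv_sum_zero hp2]
  exact Finset.sum_congr rfl (fun k _ => by rw [one_pow, one_mul])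

lemma my_Lsum_inv (x y : ZMod p) (hxy : x * y = 1) :
    x * Lsum p y = - Lsum p x := by
  have hy0 : y ≠ 0 := by rintro rfl; simp at hxy
  rw [Lsum, Lsum, Finset.mul_sum, Finset.sum_Ico_eq_sum_range, Finset.sum_Ico_eq_sum_range,
    ← Finset.sum_neg_distrib]
  conv_lhs => rw [← Finset.sum_range_reflect]
  apply Finset.sum_congr rfl
  intro i hi
  rw [Finset.mem_range] at hi
  have e : 1 + (p - 1 - 1 - i) = p - (1 + i) := by omega
  rw [e]
  have hpow : x * y ^ (p - (1 + i)) = x ^ (1 + i) := by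
    have hcancel : (x * y ^ (p - (1 + i))) * y ^ (1 + i) = x ^ (1 + i) * y ^ (1 + i) := by
      rw [mul_assoc, ← pow_add, show (p - (1 + i)) + (1 + i) = p by omega, ZMod.pow_card,
        ← mul_pow, hxy, one_pow]
    exact mul_right_cancel₀ (pow_ne_zero _ hy0) hcancel
  rw [← mul_assoc, hpow, my_inv_neg (by omega : (p - (1 + i)) + (1 + i) = p)]
  ring

end Part4

variable (p : ℕ) in
def LsumH (x : ZMod p) : ZMod p :=
  ∑ j ∈ Finset.Ico 1 (p / 2 + 1), x ^ j * ((j : ℕ) : ZMod p)⁻¹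

section Part5
variable {p : ℕ} [hpf : Fact p.Prime]

lemma my_two_ne (hp2 : 2 < p) : ((2 : ℕ) : ZMod p) ≠ 0 := by
  rw [Ne, ZMod.natCast_eq_zero_iff]
  intro hd
  have := Nat.le_of_dvd (by omega) hd
  omega

lemma my_podd (hp2 : 2 < p) : p = 2 * (p / 2) + 1 := by
  have := Nat.odd_iff.mp (hpf.out.odd_of_ne_two (by omega))
  omega

lemma my_even_sum (hp2 : 2 < p) (x : ZMod p) :
    Lsum p x + Lsum p (-x) = LsumH p (x * x) := by
  have hp' := my_podd (p := p) hp2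
  have h2 := my_two_ne (p := p) hp2
  rw [Lsum, Lsum, ← Finset.sum_add_distrib,
    show Finset.Ico 1 p = Finset.Ico 1 (2 * (p / 2) + 1) from by rw [← hp'],
    my_split2, LsumH, Finset.sum_Ico_eq_sum_range, show p / 2 + 1 - 1 = p / 2 from by omega]
  apply Finset.sum_congr rfl
  intro i hi
  have hodd : (-x) ^ (2 * i + 1) = -(x ^ (2 * i + 1)) := Odd.neg_pow ⟨i, by ring⟩ x
  have heven : (-x) ^ (2 * i + 2) = x ^ (2 * i + 2) := Even.neg_pow ⟨i + 1, by ring⟩ x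
  have hxx : (x * x) ^ (1 + i) = x ^ (2 * i + 2) := by
    rw [← pow_two, ← pow_mul]
    congr 1
    omega
  have hc : ((2 * i + 2 : ℕ) : ZMod p) = ((2 : ℕ) : ZMod p) * ((1 + i : ℕ) : ZMod p) := by
    push_cast; ring
  have einv : ((1 + i : ℕ) : ZMod p)⁻¹ = ((2 : ℕ) : ZMod p) * ((2 * i + 2 : ℕ) : ZMod p)⁻¹ := by
    rw [hc, mul_inv, ← mul_assoc, mul_inv_cancel₀ h2, one_mul]
  rw [hodd, heven, hxx, einv]
  ring

lemma my_tail (hp2 : 2 < p) (y z : ZMod p) (hyz : y * z = 1) :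
    Lsum p y = LsumH p y - y * LsumH p z := by
  have hp' := my_podd (p := p) hp2
  have hy0 : y ≠ 0 := fun h => by simp [h] at hyz
  rw [Lsum, ← Finset.sum_Ico_consecutive _ (by omega : 1 ≤ p / 2 + 1) (by omega : p / 2 + 1 ≤ p)]
  have h2 : ∑ k ∈ Finset.Ico (p / 2 + 1) p, y ^ k * ((k : ℕ) : ZMod p)⁻¹
      = -(y * LsumH p z) := by
    rw [Finset.sum_Ico_eq_sum_range, show p - (p / 2 + 1) = p / 2 from by omega,
      LsumH, Finset.mul_sum, Finset.sum_Ico_eq_sum_range,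
      show p / 2 + 1 - 1 = p / 2 from by omega, ← Finset.sum_neg_distrib]
    conv_lhs => rw [← Finset.sum_range_reflect]
    apply Finset.sum_congr rfl
    intro i hi
    rw [Finset.mem_range] at hi
    have e : p / 2 + 1 + (p / 2 - 1 - i) = p - (1 + i) := by omega
    rw [e]
    have hpow : y ^ (p - (1 + i)) = y * z ^ (1 + i) := by
      have hcancel : y ^ (p - (1 + i)) * y ^ (1 + i) = (y * z ^ (1 + i)) * y ^ (1 + i) := by
        rw [← pow_add, show p - (1 + i) + (1 + i) = p from by omega, ZMod.pow_card,
          mul_assoc, ← mul_pow, mul_comm z y, hyz, one_pow, mul_one]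
      exact mul_right_cancel₀ (pow_ne_zero _ hy0) hcancel
    rw [hpow, my_inv_neg (by omega : (p - (1 + i)) + (1 + i) = p)]
    ring
  rw [h2]
  simp only [LsumH, show (1 + p / 2) = p / 2 + 1 from by omega]
  ring

lemma my_Lsum_split (hp2 : 2 < p) (x y : ZMod p) (hxy : x * y = 1) :
    Lsum p (x * x) = (1 + x) * Lsum p x + (1 - x) * Lsum p (-x) := by
  have ht := my_tail hp2 (x * x) (y * y)
    (by rw [mul_mul_mul_comm, hxy, one_mul])
  have he1 := my_even_sum hp2 x
  have he2 := my_even_sum hp2 y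
  have hi1 := my_Lsum_inv x y hxy
  have hi2 := my_Lsum_inv (-x) (-y) (by rw [neg_mul_neg]; exact hxy)
  linear_combination ht - he1 + (x * x) * he2 - x * hi1 + x * hi2

end Part5

section Part6
variable {p : ℕ} [hpf : Fact p.Prime]

lemma my_cast_ne (a : ℕ) (h1 : 0 < a) (h2 : a < p) : ((a : ℕ) : ZMod p) ≠ 0 := by
  rw [Ne, ZMod.natCast_eq_zero_iff]
  intro hd
  have := Nat.le_of_dvd h1 hd
  omega

lemma my_inv_scale (a b : ℕ) (c : ZMod p) (hc : c * ((a : ℕ) : ZMod p) = ((b : ℕ) : ZMod p))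
    (hb : ((b : ℕ) : ZMod p) ≠ 0) :
    ((a : ℕ) : ZMod p)⁻¹ = c * ((b : ℕ) : ZMod p)⁻¹ := by
  have ha : ((a : ℕ) : ZMod p) ≠ 0 := by
    intro h
    rw [h, mul_zero] at hc
    exact hb hc.symm
  have hc0 : c ≠ 0 := by
    intro h
    rw [h, zero_mul] at hc
    exact hb hc.symm
  rw [← hc, mul_inv, ← mul_assoc, mul_inv_cancel₀ hc0, one_mul]

lemma my_exists_zeta (h5 : 5 ∣ p - 1) (hp5 : 5 < p) :
    ∃ ζ : ZMod p, ζ ^ 5 = 1 ∧ ζ ≠ 1 := by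
  obtain ⟨g, hg⟩ := IsCyclic.exists_generator (α := (ZMod p)ˣ)
  have hcard : Nat.card (ZMod p)ˣ = p - 1 := by
    rw [Nat.card_eq_fintype_card, ZMod.card_units_eq_totient, Nat.totient_prime hpf.out]
  have horder : orderOf g = p - 1 := by
    rw [orderOf_eq_card_of_forall_mem_zpowers hg, hcard]
  refine ⟨((g ^ ((p - 1) / 5) : (ZMod p)ˣ) : ZMod p), ?_, ?_⟩
  · rw [← Units.val_pow_eq_pow_val, ← pow_mul, Nat.div_mul_cancel h5, ← horder,
      pow_orderOf_eq_one, Units.val_one]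
  · intro h
    have hu : g ^ ((p - 1) / 5) = 1 := Units.ext h
    have hdvd : orderOf g ∣ (p - 1) / 5 := orderOf_dvd_of_pow_eq_one hu
    rw [horder] at hdvd
    have h2 : 0 < (p - 1) / 5 := Nat.div_pos (Nat.le_of_dvd (by omega) h5) (by omega)
    have := Nat.le_of_dvd h2 hdvd
    have : (p - 1) / 5 < p - 1 := Nat.div_lt_self (by omega) (by omega)
    omega

lemma my_fib_dvd (hp5 : 5 < p) (ζ : ZMod p) (hz5 : ζ ^ 5 = 1) (hz1 : ζ ≠ 1) :
    p ∣ Nat.fib (p - 1) := by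
  have hsumK : 1 + ζ + ζ ^ 2 + ζ ^ 3 + ζ ^ 4 = 0 := by
    have h0 : (ζ - 1) * (1 + ζ + ζ ^ 2 + ζ ^ 3 + ζ ^ 4) = 0 := by linear_combination hz5
    rcases mul_eq_zero.mp h0 with h | h
    · exact absurd (by linear_combination h) hz1
    · exact h
  set α : ZMod p := -(ζ + ζ ^ 4) with hα
  set β : ZMod p := -(ζ ^ 2 + ζ ^ 3) with hβ
  have hab : α + β = 1 := by rw [hα, hβ]; linear_combination -hsumK
  have hm : α * β = -1 := by rw [hα, hβ]; linear_combination (ζ + ζ ^ 2) * hz5 + hsumK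
  have h5ne : ((5 : ℕ) : ZMod p) ≠ 0 := my_cast_ne 5 (by omega) (by omega)
  have hαβne : α - β ≠ 0 := by
    intro h
    have hsq : (α - β) ^ 2 = ((5 : ℕ) : ZMod p) := by
      push_cast
      linear_combination (α + β + 1) * hab - 4 * hm
    rw [h] at hsq
    simp at hsq
    exact h5ne hsq.symm
  have hα0 : α ≠ 0 := by
    intro h
    rw [h, zero_mul] at hm
    simp at hm
  have hβ0 : β ≠ 0 := by
    intro h
    rw [h, mul_zero] at hm
    simp at hm
  have hb := my_binet α β hab hm (p - 1)
  rw [ZMod.pow_card_sub_one_eq_one hα0, ZMod.pow_card_sub_one_eq_one hβ0, sub_self] at hb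
  rcases mul_eq_zero.mp hb with h | h
  · exact absurd h hαβne
  · exact (ZMod.natCast_eq_zero_iff _ _).mp h

lemma my_exists_omega (h5 : p % 5 = 1) (ζ : ZMod p) (hz5 : ζ ^ 5 = 1) :
    ∃ ω : ZMod (p ^ 2), ω ^ 5 = 1 ∧ myPi p ω = ζ := by
  haveI : NeZero p := ⟨hpf.out.pos.ne'⟩
  set w0 : ZMod (p ^ 2) := ((ζ.val : ℕ) : ZMod (p ^ 2)) with hw0
  have hπw0 : myPi p w0 = ζ := by
    rw [hw0, map_natCast, ZMod.natCast_val, ZMod.cast_id]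
  refine ⟨w0 ^ p, ?_, ?_⟩
  · rw [← pow_mul, mul_comm, pow_mul]
    exact my_pow_p_eq_one _ (by rw [map_pow, hπw0, hz5])
  · rw [map_pow, hπw0, my_pow_mod ζ hz5 p, h5, pow_one]

lemma my_filter (hp5 : 5 < p) (m : ℕ) (hm : p = 10 * m + 1) (ζ : ZMod p)
    (hz5 : ζ ^ 5 = 1) (hz1 : ζ ≠ 1) :
    ζ * Lsum p ζ + ζ ^ 2 * Lsum p (ζ ^ 2) + ζ ^ 3 * Lsum p (ζ ^ 3) + ζ ^ 4 * Lsum p (ζ ^ 4)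
      = 5 * ∑ i ∈ Finset.range (2 * m), ((5 * i + 4 : ℕ) : ZMod p)⁻¹ := by
  haveI : Fact (Nat.Prime 5) := ⟨by norm_num⟩
  have hp2 : 2 < p := by omega
  have horder : orderOf ζ = 5 := orderOf_eq_prime hz5 hz1
  have key : ∀ x : ZMod p, x * Lsum p x
      = ∑ k ∈ Finset.Ico 1 p, x ^ (k + 1) * ((k : ℕ) : ZMod p)⁻¹ := by
    intro x
    rw [Lsum, Finset.mul_sum]
    exact Finset.sum_congr rfl fun k _ => by rw [pow_succ]; ring
  rw [key, key, key, key, ← Finset.sum_add_distrib, ← Finset.sum_add_distrib,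
    ← Finset.sum_add_distrib]
  have hblock4 : ∀ k : ℕ, (k + 1) % 5 = 0 →
      ζ ^ (k + 1) * ((k : ℕ) : ZMod p)⁻¹ + (ζ ^ 2) ^ (k + 1) * ((k : ℕ) : ZMod p)⁻¹
        + (ζ ^ 3) ^ (k + 1) * ((k : ℕ) : ZMod p)⁻¹ + (ζ ^ 4) ^ (k + 1) * ((k : ℕ) : ZMod p)⁻¹
      = 4 * ((k : ℕ) : ZMod p)⁻¹ := by
    intro k hk
    have h1 : ζ ^ (k + 1) = 1 := by rw [my_pow_mod ζ hz5, hk, pow_zero]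
    have h2 : (ζ ^ 2) ^ (k + 1) = 1 := by rw [← pow_mul, mul_comm 2 (k + 1), pow_mul, h1, one_pow]
    have h3 : (ζ ^ 3) ^ (k + 1) = 1 := by rw [← pow_mul, mul_comm 3 (k + 1), pow_mul, h1, one_pow]
    have h4 : (ζ ^ 4) ^ (k + 1) = 1 := by rw [← pow_mul, mul_comm 4 (k + 1), pow_mul, h1, one_pow]
    rw [h1, h2, h3, h4]
    ring
  have hblockn : ∀ k : ℕ, (k + 1) % 5 ≠ 0 →
      ζ ^ (k + 1) * ((k : ℕ) : ZMod p)⁻¹ + (ζ ^ 2) ^ (k + 1) * ((k : ℕ) : ZMod p)⁻¹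
        + (ζ ^ 3) ^ (k + 1) * ((k : ℕ) : ZMod p)⁻¹ + (ζ ^ 4) ^ (k + 1) * ((k : ℕ) : ZMod p)⁻¹
      = -((k : ℕ) : ZMod p)⁻¹ := by
    intro k hk
    set u : ZMod p := ζ ^ (k + 1) with hu
    have hu5 : u ^ 5 = 1 := by rw [hu, ← pow_mul, mul_comm, pow_mul, hz5, one_pow]
    have hu1 : u ≠ 1 := by
      intro h
      have hdvd : orderOf ζ ∣ k + 1 := orderOf_dvd_of_pow_eq_one h
      rw [horder] at hdvd
      omega
    have husum : 1 + u + u ^ 2 + u ^ 3 + u ^ 4 = 0 := by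
      have h0 : (u - 1) * (1 + u + u ^ 2 + u ^ 3 + u ^ 4) = 0 := by linear_combination hu5
      rcases mul_eq_zero.mp h0 with h | h
      · exact absurd (by linear_combination h) hu1
      · exact h
    have h2 : (ζ ^ 2) ^ (k + 1) = u ^ 2 := by rw [hu, ← pow_mul, ← pow_mul, mul_comm]
    have h3 : (ζ ^ 3) ^ (k + 1) = u ^ 3 := by rw [hu, ← pow_mul, ← pow_mul, mul_comm]
    have h4 : (ζ ^ 4) ^ (k + 1) = u ^ 4 := by rw [hu, ← pow_mul, ← pow_mul, mul_comm]
    rw [h2, h3, h4]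
    linear_combination ((k : ℕ) : ZMod p)⁻¹ * husum
  rw [show Finset.Ico 1 p = Finset.Ico 1 (5 * (2 * m) + 1) from by congr 1; omega, my_split5]
  have hz0 : ∑ j ∈ Finset.range (2 * m),
      (((5 * j + 1 : ℕ) : ZMod p)⁻¹ + ((5 * j + 2 : ℕ) : ZMod p)⁻¹ + ((5 * j + 3 : ℕ) : ZMod p)⁻¹
        + ((5 * j + 4 : ℕ) : ZMod p)⁻¹ + ((5 * j + 5 : ℕ) : ZMod p)⁻¹) = 0 := by
    rw [← my_split5 (fun k => ((k : ℕ) : ZMod p)⁻¹),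
      show Finset.Ico 1 (5 * (2 * m) + 1) = Finset.Ico 1 p from by congr 1; omega]
    exact my_inv_sum_zero hp2
  have hpt : ∀ j ∈ Finset.range (2 * m),
      ((ζ ^ (5 * j + 1 + 1) * ((5 * j + 1 : ℕ) : ZMod p)⁻¹
          + (ζ ^ 2) ^ (5 * j + 1 + 1) * ((5 * j + 1 : ℕ) : ZMod p)⁻¹
          + (ζ ^ 3) ^ (5 * j + 1 + 1) * ((5 * j + 1 : ℕ) : ZMod p)⁻¹
          + (ζ ^ 4) ^ (5 * j + 1 + 1) * ((5 * j + 1 : ℕ) : ZMod p)⁻¹)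
        + (ζ ^ (5 * j + 2 + 1) * ((5 * j + 2 : ℕ) : ZMod p)⁻¹
          + (ζ ^ 2) ^ (5 * j + 2 + 1) * ((5 * j + 2 : ℕ) : ZMod p)⁻¹
          + (ζ ^ 3) ^ (5 * j + 2 + 1) * ((5 * j + 2 : ℕ) : ZMod p)⁻¹
          + (ζ ^ 4) ^ (5 * j + 2 + 1) * ((5 * j + 2 : ℕ) : ZMod p)⁻¹)
        + (ζ ^ (5 * j + 3 + 1) * ((5 * j + 3 : ℕ) : ZMod p)⁻¹
          + (ζ ^ 2) ^ (5 * j + 3 + 1) * ((5 * j + 3 : ℕ) : ZMod p)⁻¹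
          + (ζ ^ 3) ^ (5 * j + 3 + 1) * ((5 * j + 3 : ℕ) : ZMod p)⁻¹
          + (ζ ^ 4) ^ (5 * j + 3 + 1) * ((5 * j + 3 : ℕ) : ZMod p)⁻¹)
        + (ζ ^ (5 * j + 4 + 1) * ((5 * j + 4 : ℕ) : ZMod p)⁻¹
          + (ζ ^ 2) ^ (5 * j + 4 + 1) * ((5 * j + 4 : ℕ) : ZMod p)⁻¹
          + (ζ ^ 3) ^ (5 * j + 4 + 1) * ((5 * j + 4 : ℕ) : ZMod p)⁻¹
          + (ζ ^ 4) ^ (5 * j + 4 + 1) * ((5 * j + 4 : ℕ) : ZMod p)⁻¹)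
        + (ζ ^ (5 * j + 5 + 1) * ((5 * j + 5 : ℕ) : ZMod p)⁻¹
          + (ζ ^ 2) ^ (5 * j + 5 + 1) * ((5 * j + 5 : ℕ) : ZMod p)⁻¹
          + (ζ ^ 3) ^ (5 * j + 5 + 1) * ((5 * j + 5 : ℕ) : ZMod p)⁻¹
          + (ζ ^ 4) ^ (5 * j + 5 + 1) * ((5 * j + 5 : ℕ) : ZMod p)⁻¹))
      = 5 * ((5 * j + 4 : ℕ) : ZMod p)⁻¹
        - (((5 * j + 1 : ℕ) : ZMod p)⁻¹ + ((5 * j + 2 : ℕ) : ZMod p)⁻¹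
          + ((5 * j + 3 : ℕ) : ZMod p)⁻¹ + ((5 * j + 4 : ℕ) : ZMod p)⁻¹
          + ((5 * j + 5 : ℕ) : ZMod p)⁻¹) := by
    intro j _
    rw [hblockn (5 * j + 1) (by omega), hblockn (5 * j + 2) (by omega),
      hblockn (5 * j + 3) (by omega), hblock4 (5 * j + 4) (by omega),
      hblockn (5 * j + 5) (by omega)]
    ring
  rw [Finset.sum_congr rfl hpt, Finset.sum_sub_distrib, hz0, sub_zero, Finset.mul_sum]

end Part6

theorem harmonic_combination_eq_neg_five_fib_quotient (p : ℕ) (hp : p.Prime) (hp5 : 5 < p)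
    (h5 : p % 5 = 1) :
    (∑ k ∈ Finset.Icc 1 ((p - 1) / 2), ((k : ZMod p))⁻¹)
      + (∑ k ∈ Finset.Icc 1 ((p - 1) / 5), ((k : ZMod p))⁻¹)
      - (∑ k ∈ Finset.Icc 1 (3 * (p - 1) / 10), ((k : ZMod p))⁻¹)
      = -5 * (((Nat.fib (p - 1) : ℤ) / (p : ℤ) : ℤ) : ZMod p) := by
  haveI : Fact p.Prime := ⟨hp⟩
  haveI : Fact (Nat.Prime 5) := ⟨by norm_num⟩
  have hp2 : 2 < p := by omega
  have hpodd : p % 2 = 1 := Nat.odd_iff.mp (hp.odd_of_ne_two (by omega))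
  obtain ⟨m, hm⟩ : ∃ m, p = 10 * m + 1 := ⟨p / 10, by omega⟩
  have hm1 : 1 ≤ m := by omega
  rw [show (p - 1) / 2 = 5 * m from by omega, show (p - 1) / 5 = 2 * m from by omega,
    show 3 * (p - 1) / 10 = 3 * m from by omega]
  obtain ⟨ζ, hz5, hz1⟩ := my_exists_zeta (p := p) (by omega) hp5
  have horder : orderOf ζ = 5 := orderOf_eq_prime hz5 hz1
  have hzz : ∀ a b : ℕ, a % 5 = b % 5 → ζ ^ a = ζ ^ b := fun a b h => by
    rw [my_pow_mod ζ hz5 a, my_pow_mod ζ hz5 b, h]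
  have hsumK : 1 + ζ + ζ ^ 2 + ζ ^ 3 + ζ ^ 4 = 0 := by
    have h0 : (ζ - 1) * (1 + ζ + ζ ^ 2 + ζ ^ 3 + ζ ^ 4) = 0 := by linear_combination hz5
    rcases mul_eq_zero.mp h0 with h | h
    · exact absurd (by linear_combination h) hz1
    · exact h
  have hdvd : p ∣ Nat.fib (p - 1) := my_fib_dvd hp5 ζ hz5 hz1
  -- identify the right-hand side with the natural-number Fibonacci quotient
  have hRHS : ((((Nat.fib (p - 1) : ℤ) / (p : ℤ)) : ℤ) : ZMod p)
      = ((Nat.fib (p - 1) / p : ℕ) : ZMod p) := by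
    have hn : (Nat.fib (p - 1) : ℤ) = (p : ℤ) * ((Nat.fib (p - 1) / p : ℕ) : ℤ) := by
      exact_mod_cast (Nat.mul_div_cancel' hdvd).symm
    rw [hn, Int.mul_ediv_cancel_left _ (by exact_mod_cast hp.pos.ne' : (p : ℤ) ≠ 0)]
    exact Int.cast_natCast _
  rw [hRHS]
  set c : ZMod p := ((Nat.fib (p - 1) / p : ℕ) : ZMod p) with hcdef
  -- the core mod p² congruence, instantiated at ζ³
  obtain ⟨ω, hw5, hπ⟩ := my_exists_omega h5 ζ hz5
  have hz31 : ζ ^ 3 ≠ 1 := by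
    intro h
    have hdvd3 : orderOf ζ ∣ 3 := orderOf_dvd_of_pow_eq_one h
    rw [horder] at hdvd3
    omega
  have hE3 := my_core hp5 h5 (ω ^ 3)
    (by rw [← pow_mul, mul_comm 3 5, pow_mul, hw5, one_pow])
    (ζ ^ 3) (by rw [map_pow, hπ]) hz31 hdvd
  rw [← hcdef] at hE3
  have e32 : ((ζ ^ 3 : ZMod p)) ^ 2 = ζ := by
    rw [← pow_mul, hzz (3 * 2) 1 (by norm_num), pow_one]
  have e34 : ((ζ ^ 3 : ZMod p)) ^ 4 = ζ ^ 2 := by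
    rw [← pow_mul]; exact hzz (3 * 4) 2 (by norm_num)
  rw [e32, e34] at hE3
  -- inversion and splitting identities
  have h14 : ζ * ζ ^ 4 = 1 := by rw [← pow_succ']; exact hz5
  have h23 : ζ ^ 2 * ζ ^ 3 = 1 := by rw [← pow_add]; exact hz5
  have hInv1 := my_Lsum_inv ζ (ζ ^ 4) h14
  have hInv2 := my_Lsum_inv (ζ ^ 2) (ζ ^ 3) h23
  have hS1 := my_Lsum_split hp2 ζ (ζ ^ 4) h14
  rw [show ζ * ζ = ζ ^ 2 from (pow_two ζ).symm] at hS1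
  have hS2 := my_Lsum_split hp2 (ζ ^ 2) (ζ ^ 3) h23
  rw [show (ζ ^ 2) * (ζ ^ 2) = ζ ^ 4 from by rw [← pow_add]] at hS2
  -- the certificate computation
  have hcert : 2 * (ζ * Lsum p ζ + ζ ^ 2 * Lsum p (ζ ^ 2) + ζ ^ 3 * Lsum p (ζ ^ 3)
      + ζ ^ 4 * Lsum p (ζ ^ 4)) = 5 * c := by
    linear_combination (1 + 2 * ζ ^ 2 + 2 * ζ ^ 3) * hE3 + (ζ + ζ ^ 3) * hInv1
      + (2 * ζ) * hInv2 + (-ζ + ζ ^ 2) * hS1 + (-1 - ζ - 2 * ζ ^ 2 - ζ ^ 3) * hS2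
      + ((-1 - ζ) * Lsum p (ζ ^ 2) + Lsum p (ζ ^ 4) + 2 * ζ ^ 2 * Lsum p (-ζ)
        + (-1 - ζ) * Lsum p (-ζ ^ 2)
        + (-5 + 4 * ζ + 2 * ζ ^ 2 - 2 * ζ ^ 3 + ζ ^ 4 - ζ ^ 5 + 2 * ζ ^ 6 - 2 * ζ ^ 8) * c)
        * hsumK
  have hfilter := my_filter hp5 m hm ζ hz5 hz1
  -- harmonic sum manipulations
  have hIcc5 : ∑ k ∈ Finset.Icc 1 (5 * m), ((k : ZMod p))⁻¹
      = ∑ k ∈ Finset.Ico 1 (5 * m + 1), ((k : ZMod p))⁻¹ := by rw [Finset.Ico_add_one_right_eq_Icc]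
  have hIcc2 : ∑ k ∈ Finset.Icc 1 (2 * m), ((k : ZMod p))⁻¹
      = ∑ k ∈ Finset.Ico 1 (2 * m + 1), ((k : ZMod p))⁻¹ := by rw [Finset.Ico_add_one_right_eq_Icc]
  have hIcc3 : ∑ k ∈ Finset.Icc 1 (3 * m), ((k : ZMod p))⁻¹
      = ∑ k ∈ Finset.Ico 1 (3 * m + 1), ((k : ZMod p))⁻¹ := by rw [Finset.Ico_add_one_right_eq_Icc]
  rw [hIcc5, hIcc2, hIcc3]
  have hsplitA : ∑ k ∈ Finset.Ico 1 (5 * m + 1), ((k : ZMod p))⁻¹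
      = ∑ k ∈ Finset.Ico 1 (3 * m + 1), ((k : ZMod p))⁻¹
        + ∑ k ∈ Finset.Ico (3 * m + 1) (5 * m + 1), ((k : ZMod p))⁻¹ :=
    (Finset.sum_Ico_consecutive _ (by omega) (by omega)).symm
  have hT1 : ∑ k ∈ Finset.Ico (3 * m + 1) (5 * m + 1), ((k : ZMod p))⁻¹
      = (-2 : ZMod p) * ∑ i ∈ Finset.range (2 * m), ((2 * i + 1 : ℕ) : ZMod p)⁻¹ := by
    rw [Finset.mul_sum, Finset.sum_Ico_eq_sum_range,
      show 5 * m + 1 - (3 * m + 1) = 2 * m from by omega]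
    conv_lhs => rw [← Finset.sum_range_reflect]
    apply Finset.sum_congr rfl
    intro i hi
    rw [Finset.mem_range] at hi
    rw [show 3 * m + 1 + (2 * m - 1 - i) = 5 * m - i from by omega]
    refine my_inv_scale _ _ _ ?_ (my_cast_ne _ (by omega) (by omega))
    have hcast := my_cast_neg (p := p) (by omega : 2 * (5 * m - i) + (2 * i + 1) = p)
    push_cast at hcast ⊢
    linear_combination -hcast
  have hH4split : ∑ k ∈ Finset.Ico 1 (4 * m + 1), ((k : ZMod p))⁻¹
      = ∑ j ∈ Finset.range (2 * m), ((2 * j + 1 : ℕ) : ZMod p)⁻¹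
        + ∑ j ∈ Finset.range (2 * m), ((2 * j + 2 : ℕ) : ZMod p)⁻¹ := by
    rw [show 4 * m + 1 = 2 * (2 * m) + 1 from by ring, my_split2, Finset.sum_add_distrib]
  have hH2 : ∑ k ∈ Finset.Ico 1 (2 * m + 1), ((k : ZMod p))⁻¹
      = (2 : ZMod p) * ∑ i ∈ Finset.range (2 * m), ((2 * i + 2 : ℕ) : ZMod p)⁻¹ := by
    rw [Finset.mul_sum, Finset.sum_Ico_eq_sum_range,
      show 2 * m + 1 - 1 = 2 * m from by omega]
    apply Finset.sum_congr rfl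
    intro i hi
    rw [Finset.mem_range] at hi
    refine my_inv_scale _ _ _ ?_ (my_cast_ne _ (by omega) (by omega))
    push_cast
    ring
  have hsplitB : ∑ k ∈ Finset.Ico 1 (4 * m + 1), ((k : ZMod p))⁻¹
      = ∑ k ∈ Finset.Ico 1 (2 * m + 1), ((k : ZMod p))⁻¹
        + ∑ k ∈ Finset.Ico (2 * m + 1) (4 * m + 1), ((k : ZMod p))⁻¹ :=
    (Finset.sum_Ico_consecutive _ (by omega) (by omega)).symm
  have hII : ∑ k ∈ Finset.Ico (2 * m + 1) (4 * m + 1), ((k : ZMod p))⁻¹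
      = (5 : ZMod p) * ∑ i ∈ Finset.range (2 * m), ((5 * i + 4 : ℕ) : ZMod p)⁻¹ := by
    rw [Finset.mul_sum, Finset.sum_Ico_eq_sum_range,
      show 4 * m + 1 - (2 * m + 1) = 2 * m from by omega]
    apply Finset.sum_congr rfl
    intro i hi
    rw [Finset.mem_range] at hi
    refine my_inv_scale _ _ _ ?_ (my_cast_ne _ (by omega) (by omega))
    have e : 5 * (2 * m + 1 + i) = p + (5 * i + 4) := by omega
    have hcast : ((5 * (2 * m + 1 + i) : ℕ) : ZMod p) = ((5 * i + 4 : ℕ) : ZMod p) := by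
      rw [e]
      push_cast [ZMod.natCast_self]
      ring
    push_cast at hcast ⊢
    linear_combination hcast
  linear_combination hsplitA + hT1 + 2 * hH4split - hH2 - 2 * hsplitB - 2 * hII
    + 2 * hfilter - hcert
end

section
/- For any integers n ≥ m ≥ 1 and any complex number z, ((z+1)^{n+1}/n)·∑_{k=0}^{m-1} z^k/C(n-1,k) = ∑_{k=1}^{n} C(n,k)·z^{n-k}/k + (H_n + H_m - H_{n-m})·z^n - (z^m/C(n,m))·∑_{0 ≤ k ≤ n, k ≠ m} C(n,k)·z^{n-k}/(k-m). -/
open Finset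

set_option maxHeartbeats 1000000

lemma natcast_succ_ne_zero' (k : ℕ) : ((k:ℂ) + 1) ≠ 0 := by
  have h : ((k+1:ℕ):ℂ) ≠ 0 := Nat.cast_ne_zero.mpr k.succ_ne_zero
  push_cast at h; exact h

lemma rQ (n m : ℕ) (hm : m ≤ n) :
    ((n.choose (m+1) : ℕ) : ℂ) = (n.choose m : ℂ) * ((n:ℂ) - m) / ((m:ℂ)+1) := by
  have hc : ((n.choose (m+1) * (m+1) : ℕ) : ℂ) = ((n.choose m * (n - m) : ℕ) : ℂ) :=
    congrArg (Nat.cast : ℕ → ℂ) (Nat.choose_succ_right_eq n m)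
  push_cast [Nat.cast_sub hm] at hc
  have := natcast_succ_ne_zero' m
  field_simp
  linear_combination hc

lemma rR (n m : ℕ) (hm : m < n) :
    (((n-1).choose m : ℕ) : ℂ) = (n.choose m : ℂ) * ((n:ℂ) - m) / (n:ℂ) := by
  have h1 : n - 1 + 1 = n := by omega
  have hc0 := Nat.choose_mul_succ_eq (n-1) m
  rw [h1] at hc0
  have hc : (((n-1).choose m * n : ℕ) : ℂ) = ((n.choose m * (n - m) : ℕ) : ℂ) :=
    congrArg (Nat.cast : ℕ → ℂ) hc0
  push_cast [Nat.cast_sub hm.le] at hc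
  have hnn : ((n:ℂ)) ≠ 0 := Nat.cast_ne_zero.mpr (by omega)
  field_simp
  linear_combination hc

lemma rD (n k : ℕ) :
    (((n+1).choose (k+1) : ℕ) : ℂ) = ((n:ℂ)+1) * (n.choose k) / ((k:ℂ)+1) := by
  have hc : ((Nat.succ n * n.choose k : ℕ) : ℂ) = (((n+1).choose (k+1) * (k+1) : ℕ) : ℂ) :=
    congrArg (Nat.cast : ℕ → ℂ) (Nat.add_one_mul_choose_eq n k)
  push_cast at hc
  have := natcast_succ_ne_zero' k
  field_simp
  linear_combination -hc

lemma abstract_key (a P κ μ ν : ℂ) (hd : κ - μ ≠ 0) (hk1 : κ + 1 ≠ 0) (hm1 : μ + 1 ≠ 0)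
    (hν : ν ≠ 0) (hνμ : ν - μ ≠ 0) (hP : P ≠ 0) :
    a / (κ - μ) / P - (a * (ν - κ) / (κ + 1)) / (κ - μ) / (P * (ν - μ) / (μ + 1))
      = ((ν + 1) * a / (κ + 1)) / ν / (P * (ν - μ) / ν) := by
  have h2 : P * (ν - μ) / (μ + 1) ≠ 0 := div_ne_zero (mul_ne_zero hP hνμ) hm1
  have h3 : P * (ν - μ) / ν ≠ 0 := div_ne_zero (mul_ne_zero hP hνμ) hν
  rw [div_sub_div _ _ hP h2, div_eq_div_iff (mul_ne_zero hP h2) h3]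
  field_simp
  ring

lemma key (n m k : ℕ) (hm : m < n) (hk : k ≤ n) (hkm : k ≠ m) :
    (n.choose k : ℂ) / ((k:ℂ) - m) / (n.choose m : ℂ)
      - (n.choose (k+1) : ℂ) / ((k:ℂ) - m) / (n.choose (m+1) : ℂ)
      = ((n+1).choose (k+1) : ℂ) / (n:ℂ) / ((n-1).choose m : ℂ) := by
  have hd : ((k:ℂ) - m) ≠ 0 := sub_ne_zero.mpr (by exact_mod_cast hkm)
  have hnm : ((n:ℂ) - m) ≠ 0 := sub_ne_zero.mpr (by exact_mod_cast (by omega : n ≠ m))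
  have hnn : ((n:ℂ)) ≠ 0 := Nat.cast_ne_zero.mpr (by omega)
  have hP : ((n.choose m : ℕ) : ℂ) ≠ 0 := Nat.cast_ne_zero.mpr (Nat.choose_pos hm.le).ne'
  have r2 : ((n.choose (k+1) : ℕ) : ℂ) = (n.choose k : ℂ) * ((n:ℂ) - k) / ((k:ℂ)+1) := by
    have hc : ((n.choose (k+1) * (k+1) : ℕ) : ℂ) = ((n.choose k * (n - k) : ℕ) : ℂ) :=
      congrArg (Nat.cast : ℕ → ℂ) (Nat.choose_succ_right_eq n k)
    push_cast [Nat.cast_sub hk] at hc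
    have := natcast_succ_ne_zero' k
    field_simp
    linear_combination hc
  rw [rD n k, r2, rQ n m hm.le, rR n m hm]
  exact abstract_key _ _ _ _ _ hd (natcast_succ_ne_zero' k) (natcast_succ_ne_zero' m) hnn hnm hP

lemma hbin (n m : ℕ) (z : ℂ) :
    ∑ k ∈ range (n+1), (((n+1).choose (k+1) : ℕ) : ℂ) * z^(n+m-k)
      = (z+1)^(n+1) * z^m - z^(n+m+1) := by
  have h1 : ∑ k ∈ range (n+1), (((n+1).choose (k+1) : ℕ) : ℂ) * z^(n+m-k)
      = ∑ k ∈ range (n+1), (((n+1).choose k : ℕ) : ℂ) * z^(m+k) := by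
    rw [← Finset.sum_range_reflect]
    apply Finset.sum_congr rfl
    intro k hk
    simp only [Finset.mem_range, Nat.add_sub_cancel] at hk ⊢
    have h2 : n - k + 1 = (n+1) - k := by omega
    have h3 : n + m - (n - k) = m + k := by omega
    rw [h2, h3, Nat.choose_symm (by omega)]
  rw [h1]
  have hpow : (z+1)^(n+1) * z^m = ∑ i ∈ range (n+2), (((n+1).choose i : ℕ) : ℂ) * z^(m+i) := by
    rw [add_pow, Finset.sum_mul]
    apply Finset.sum_congr rfl
    intro i hi
    rw [pow_add]
    simp [one_pow]
    ring
  rw [hpow, Finset.sum_range_succ _ (n+1), Nat.choose_self,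
     show m + (n+1) = n+m+1 from by omega]
  push_cast
  ring

lemma abstract_final (W u v t C a b : ℂ) (ha : a ≠ 0) (hb : b ≠ 0) (hC : C ≠ 0) :
    (W * u - u * v * t) / (C * a)
      - (a + b) * C / b * v / (C * a)
      - u * t * b / (C * a) * ((1:ℂ) * v / ((0:ℂ) - b))
      = W * u / (C * a) - (1 / b + 1 / a) * v := by
  rw [zero_sub, div_neg, one_mul]
  rw [div_sub_div _ _ (mul_ne_zero hC ha) (mul_ne_zero hC ha), sub_eq_iff_eq_add]
  field_simp
  ring

lemma star (n m : ℕ) (hm : m < n) (z : ℂ) :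
    z^m / (n.choose m : ℂ) * (∑ k ∈ range (n+1), (n.choose k : ℂ) * z^(n-k) / ((k:ℂ) - m))
    - z^(m+1) / (n.choose (m+1) : ℂ) *
        (∑ k ∈ range (n+1), (n.choose k : ℂ) * z^(n-k) / ((k:ℂ) - (m+1:ℕ)))
    = (z+1)^(n+1) * z^m / ((n:ℂ) * ((n-1).choose m : ℂ))
      - (1/((m:ℂ)+1) + 1/((n:ℂ)-(m:ℂ))) * z^n := by
  have hA : z^m / (n.choose m : ℂ) * (∑ k ∈ range (n+1), (n.choose k : ℂ) * z^(n-k) / ((k:ℂ) - m))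
      = ∑ k ∈ range (n+1), (n.choose k : ℂ) * z^(n+m-k) / ((k:ℂ)-m) / (n.choose m : ℂ) := by
    rw [Finset.mul_sum]
    apply Finset.sum_congr rfl
    intro k hk
    simp only [Finset.mem_range] at hk
    rw [show n+m-k = (n-k)+m from by omega, pow_add]
    ring
  have hB : z^(m+1) / (n.choose (m+1) : ℂ) *
        (∑ k ∈ range (n+1), (n.choose k : ℂ) * z^(n-k) / ((k:ℂ) - (m+1:ℕ)))
      = (∑ k ∈ range (n+1), (n.choose (k+1) : ℂ) * z^(n+m-k) / ((k:ℂ)-m) / (n.choose (m+1) : ℂ))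
        + z^(m+1) / (n.choose (m+1) : ℂ) * ((n.choose 0 : ℂ) * z^(n-0) / (((0:ℕ):ℂ) - (m+1:ℕ))) := by
    rw [Finset.sum_range_succ' (fun k => (n.choose k : ℂ) * z^(n-k) / ((k:ℂ) - (m+1:ℕ))) n]
    rw [mul_add]
    congr 1
    rw [Finset.sum_range_succ
      (fun k => (n.choose (k+1) : ℂ) * z^(n+m-k) / ((k:ℂ)-m) / (n.choose (m+1) : ℂ)) n]
    rw [Nat.choose_succ_self]
    simp only [Nat.cast_zero, zero_mul, zero_div, add_zero]
    rw [Finset.mul_sum]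
    apply Finset.sum_congr rfl
    intro k hk
    simp only [Finset.mem_range] at hk
    have e1 : ((k+1:ℕ):ℂ) - ((m+1:ℕ):ℂ) = (k:ℂ) - m := by push_cast; ring
    rw [e1, show n+m-k = (n-(k+1))+(m+1) from by omega, pow_add]
    ring
  rw [hA, hB]
  rw [show ∀ a b c : ℂ, a - (b + c) = (a - b) - c from fun a b c => by ring]
  rw [← Finset.sum_sub_distrib]
  have hterm : ∀ k ∈ range (n+1),
      (n.choose k : ℂ) * z^(n+m-k) / ((k:ℂ)-m) / (n.choose m : ℂ)
        - (n.choose (k+1) : ℂ) * z^(n+m-k) / ((k:ℂ)-m) / (n.choose (m+1) : ℂ)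
      = (((n+1).choose (k+1) : ℕ) : ℂ) * z^(n+m-k) / ((n:ℂ) * ((n-1).choose m : ℂ))
        - (if k = m then (((n+1).choose (m+1) : ℕ) : ℂ) * z^n / ((n:ℂ) * ((n-1).choose m : ℂ)) else 0) := by
    intro k hk
    simp only [Finset.mem_range] at hk
    by_cases hkm : k = m
    · rw [if_pos hkm, hkm, sub_self, div_zero, div_zero, zero_div, zero_div,
          show n+m-m = n from by omega]
      ring
    · rw [if_neg hkm, sub_zero]
      have hkey := key n m k hm (by omega) hkm
      have expand : ((n:ℂ) * ((n-1).choose m : ℂ)) ≠ 0 ∨ True := Or.inr trivial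
      calc (n.choose k : ℂ) * z^(n+m-k) / ((k:ℂ)-m) / (n.choose m : ℂ)
            - (n.choose (k+1) : ℂ) * z^(n+m-k) / ((k:ℂ)-m) / (n.choose (m+1) : ℂ)
          = ((n.choose k : ℂ) / ((k:ℂ)-m) / (n.choose m : ℂ)
              - (n.choose (k+1) : ℂ) / ((k:ℂ)-m) / (n.choose (m+1) : ℂ)) * z^(n+m-k) := by ring
        _ = (((n+1).choose (k+1) : ℕ) : ℂ) / (n:ℂ) / ((n-1).choose m : ℂ) * z^(n+m-k) := by
              rw [hkey]
        _ = (((n+1).choose (k+1) : ℕ) : ℂ) * z^(n+m-k) / ((n:ℂ) * ((n-1).choose m : ℂ)) := by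
              rw [div_div]; ring
  rw [Finset.sum_congr rfl hterm, Finset.sum_sub_distrib, Finset.sum_ite_eq',
      if_pos (Finset.mem_range.mpr (by omega : m < n+1))]
  have hG : ∑ k ∈ range (n+1),
      (((n+1).choose (k+1) : ℕ) : ℂ) * z^(n+m-k) / ((n:ℂ) * ((n-1).choose m : ℂ))
      = ((z+1)^(n+1) * z^m - z^(n+m+1)) / ((n:ℂ) * ((n-1).choose m : ℂ)) := by
    rw [← Finset.sum_div, hbin n m z]
  rw [hG, Nat.choose_zero_right, Nat.cast_zero, Nat.sub_zero, rQ n m hm.le, rR n m hm, rD n m]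
  have hμ1 := natcast_succ_ne_zero' m
  have hν : ((n:ℂ)) ≠ 0 := Nat.cast_ne_zero.mpr (by omega)
  have hνμ : ((n:ℂ) - m) ≠ 0 := sub_ne_zero.mpr (by exact_mod_cast (by omega : n ≠ m))
  have hP : ((n.choose m : ℕ) : ℂ) ≠ 0 := Nat.cast_ne_zero.mpr (Nat.choose_pos hm.le).ne'
  have hD : (n:ℂ) * ((n.choose m : ℂ) * ((n:ℂ)-m)/(n:ℂ)) = (n.choose m : ℂ) * ((n:ℂ)-m) := by
    field_simp
  have hE : ∀ x : ℂ, x / ((n.choose m : ℂ) * ((n:ℂ)-m)/((m:ℂ)+1))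
      = x * ((m:ℂ)+1) / ((n.choose m : ℂ) * ((n:ℂ)-m)) := fun x => by
    rw [div_div_eq_mul_div]
  rw [hD, hE]
  push_cast
  rw [show z^(n+m+1) = z^m * z^n * z from by
        rw [show n+m+1 = m+n+1 from by omega, pow_succ, pow_add],
      show z^(m+1) = z^m * z from pow_succ z m,
      show ((n:ℂ)+1) = ((n:ℂ)-(m:ℂ)) + ((m:ℂ)+1) from by ring]
  exact abstract_final ((z+1)^(n+1)) (z^m) (z^n) z _ _ _ hνμ hμ1 hP

lemma erase_eq (n m : ℕ) (z : ℂ) :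
    ∑ k ∈ (Finset.range (n + 1)).erase m,
        (Nat.choose n k : ℂ) * z ^ (n - k) / ((k : ℂ) - m)
      = ∑ k ∈ Finset.range (n + 1), (Nat.choose n k : ℂ) * z ^ (n - k) / ((k : ℂ) - m) := by
  apply Finset.sum_erase
  simp

lemma aux (n : ℕ) (hn : 1 ≤ n) (z : ℂ) : ∀ m, m ≤ n →
    (z + 1) ^ (n + 1) / n * ∑ k ∈ Finset.range m, z ^ k / (Nat.choose (n - 1) k : ℂ)
      = (∑ k ∈ Finset.Icc 1 n, (Nat.choose n k : ℂ) * z ^ (n - k) / k)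
        + ((∑ i ∈ Finset.Icc 1 n, (1 : ℂ) / i) + (∑ i ∈ Finset.Icc 1 m, (1 : ℂ) / i)
           - (∑ i ∈ Finset.Icc 1 (n - m), (1 : ℂ) / i)) * z ^ n
        - z ^ m / (Nat.choose n m : ℂ) *
            ∑ k ∈ (Finset.range (n + 1)).erase m,
              (Nat.choose n k : ℂ) * z ^ (n - k) / ((k : ℂ) - m) := by
  intro m
  induction m with
  | zero =>
    intro _
    rw [erase_eq]
    have hf : ∑ k ∈ Finset.range (n+1), (Nat.choose n k : ℂ) * z ^ (n - k) / (k : ℂ)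
        = ∑ k ∈ Finset.Icc 1 n, (Nat.choose n k : ℂ) * z ^ (n - k) / (k:ℂ) := by
      rw [show Finset.range (n+1) = insert 0 (Finset.Icc 1 n) from by
            ext x; simp [Finset.mem_range, Finset.mem_Icc]; omega]
      rw [Finset.sum_insert (by simp)]
      simp
    simp only [Finset.range_zero, Finset.sum_empty, mul_zero, Nat.sub_zero, pow_zero,
      Nat.choose_zero_right, Nat.cast_one, Nat.cast_zero, sub_zero]
    rw [Finset.Icc_eq_empty (by omega : ¬ (1:ℕ) ≤ 0), Finset.sum_empty, hf]
    ring
  | succ m ih =>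
    intro h1
    rw [Finset.sum_range_succ, erase_eq n (m+1) z]
    have ih' := ih (by omega)
    rw [erase_eq n m z] at ih'
    have hstar := star n m (by omega) z
    have f2 : ∑ i ∈ Finset.Icc 1 (m+1), (1:ℂ)/(i:ℂ)
        = (∑ i ∈ Finset.Icc 1 m, (1:ℂ)/(i:ℂ)) + 1/((m:ℂ)+1) := by
      rw [Finset.sum_Icc_succ_top (by omega : 1 ≤ m+1)]
      push_cast
      ring
    have f3 : ∑ i ∈ Finset.Icc 1 (n-m), (1:ℂ)/(i:ℂ)
        = (∑ i ∈ Finset.Icc 1 (n-(m+1)), (1:ℂ)/(i:ℂ)) + 1/((n:ℂ)-(m:ℂ)) := by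
      rw [show n-m = (n-(m+1))+1 from by omega,
          Finset.sum_Icc_succ_top (by omega : 1 ≤ n-(m+1)+1)]
      congr 2
      rw [show n-(m+1)+1 = n-m from by omega, Nat.cast_sub (by omega)]
    linear_combination ih' - hstar - z^n * f2 - z^n * f3

theorem poly_identity_one (n m : ℕ) (hm : 1 ≤ m) (hmn : m ≤ n) (z : ℂ) :
    (z + 1) ^ (n + 1) / n * ∑ k ∈ Finset.range m, z ^ k / (Nat.choose (n - 1) k : ℂ)
      = (∑ k ∈ Finset.Icc 1 n, (Nat.choose n k : ℂ) * z ^ (n - k) / k)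
        + ((∑ i ∈ Finset.Icc 1 n, (1 : ℂ) / i) + (∑ i ∈ Finset.Icc 1 m, (1 : ℂ) / i)
           - (∑ i ∈ Finset.Icc 1 (n - m), (1 : ℂ) / i)) * z ^ n
        - z ^ m / (Nat.choose n m : ℂ) *
            ∑ k ∈ (Finset.range (n + 1)).erase m,
              (Nat.choose n k : ℂ) * z ^ (n - k) / ((k : ℂ) - m) := by
  exact aux n (le_trans hm hmn) z m hmn
end

section
/- For any prime p > 3, H_{⌊p/2⌋} ≡ -2·q_p(2) (mod p), where H_n = ∑_{k=1}^n 1/k is taken in Z/pZ and q_p(2) = (2^{p-1}-1)/p. -/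
open Finset

-- (1) choose (p-1) j ≡ (-1)^j mod p
lemma aux_choose_neg_one (p : ℕ) (hp : p.Prime) :
    ∀ j, j ≤ p - 1 → ((Nat.choose (p-1) j : ZMod p)) = (-1)^j := by
  intro j
  induction j with
  | zero => intro _; simp
  | succ j ih =>
    intro hj
    have hjp : j ≤ p - 1 := le_of_lt (Nat.lt_of_lt_of_le (Nat.lt_succ_self j) hj)
    have hplt : j + 1 < p := lt_of_le_of_lt hj (Nat.sub_lt hp.pos one_pos)
    have h0 : ((Nat.choose p (j+1) : ZMod p)) = 0 := by
      rw [ZMod.natCast_eq_zero_iff]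
      exact hp.dvd_choose_self (Nat.succ_ne_zero j) hplt
    have hpascal : Nat.choose p (j+1) = Nat.choose (p-1) j + Nat.choose (p-1) (j+1) := by
      conv_lhs => rw [← Nat.succ_pred_eq_of_pos hp.pos]
      exact Nat.choose_succ_succ _ _
    rw [hpascal] at h0
    push_cast at h0
    rw [ih hjp] at h0
    have : ((Nat.choose (p-1) (j+1) : ZMod p)) = -(-1)^j := by linear_combination h0
    rw [this]; ring

-- H_{p-1} = 0 in ZMod p, p odd prime
lemma aux_harmonic_full (p : ℕ) (hp : p.Prime) (hp3 : 3 < p) :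
    (∑ k ∈ Finset.Icc 1 (p - 1), ((k : ZMod p))⁻¹) = 0 := by
  haveI : Fact p.Prime := ⟨hp⟩
  -- reindex: Icc 1 (p-1) → univ \ {0} in ZMod p
  have h1 : (∑ k ∈ Finset.Icc 1 (p - 1), ((k : ZMod p))⁻¹)
      = ∑ x ∈ (Finset.univ \ {0} : Finset (ZMod p)), x⁻¹ := by
    refine Finset.sum_nbij' (fun k => ((k : ZMod p))) (fun x => x.val) ?_ ?_ ?_ ?_ ?_
    · intro a ha
      simp only [Finset.mem_Icc] at ha
      simp only [Finset.mem_sdiff, Finset.mem_univ, Finset.mem_singleton, true_and]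
      intro h0
      rw [ZMod.natCast_eq_zero_iff] at h0
      have := Nat.le_of_dvd (by omega) h0
      omega
    · intro x hx
      simp only [Finset.mem_sdiff, Finset.mem_univ, Finset.mem_singleton, true_and] at hx
      have h1 : x.val ≠ 0 := fun h => hx (by rwa [← ZMod.val_eq_zero])
      have h2 : x.val < p := ZMod.val_lt x
      simp only [Finset.mem_Icc]; omega
    · intro a ha
      simp only [Finset.mem_Icc] at ha
      rw [ZMod.val_cast_of_lt (by omega)]
    · intro x hx
      exact ZMod.natCast_zmod_val x
    · intro a ha; rfl
  rw [h1]
  -- inv is a bijection on univ \ {0}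
  have h2 : (∑ x ∈ (Finset.univ \ {0} : Finset (ZMod p)), x⁻¹)
      = ∑ x ∈ (Finset.univ \ {0} : Finset (ZMod p)), x := by
    refine Finset.sum_nbij' (fun x => x⁻¹) (fun x => x⁻¹) ?_ ?_ ?_ ?_ ?_
    · intro a ha
      simp only [Finset.mem_sdiff, Finset.mem_univ, Finset.mem_singleton, true_and] at ha ⊢
      exact inv_ne_zero ha
    · intro a ha
      simp only [Finset.mem_sdiff, Finset.mem_univ, Finset.mem_singleton, true_and] at ha ⊢
      exact inv_ne_zero ha
    · intro a ha; exact inv_inv a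
    · intro a ha; exact inv_inv a
    · intro a ha; rfl
  rw [h2]
  -- sum over univ \ {0} = sum over univ = 0
  have h3 : (∑ x ∈ (Finset.univ \ {0} : Finset (ZMod p)), x)
      = ∑ x : ZMod p, x := by
    rw [Finset.sum_sdiff_eq_sub (Finset.subset_univ _)]
    simp
  rw [h3]
  -- sum of all elements = 0 since p odd
  have hodd : (2 : ZMod p) ≠ 0 := by
    have : ((2:ℕ) : ZMod p) ≠ 0 := by
      rw [Ne, ZMod.natCast_eq_zero_iff]
      intro h; have := Nat.le_of_dvd (by norm_num) h; omega
    simpa using this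
  have hs : (∑ x : ZMod p, x) = ∑ x : ZMod p, (-x) := by
    exact (Finset.sum_nbij' (fun x => -x) (fun x => -x) (fun a _ => Finset.mem_univ _)
      (fun a _ => Finset.mem_univ _) (fun a _ => neg_neg a) (fun a _ => neg_neg a)
      (fun a _ => (neg_neg a).symm))
  have : 2 * (∑ x : ZMod p, x) = 0 := by
    rw [two_mul]; nth_rewrite 2 [hs]; rw [← Finset.sum_add_distrib]; simp
  exact (mul_eq_zero.mp this).resolve_left hodd

lemma aux_two_step {F : Type*} [AddCommMonoid F] (f : ℕ → F) (n : ℕ) :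
    ∑ k ∈ Finset.Icc 1 (n+2), f k = (∑ k ∈ Finset.Icc 1 n, f k) + f (n+1) + f (n+2) := by
  rw [← Finset.Ico_add_one_right_eq_Icc 1 (n+2), Finset.sum_Ico_succ_top (by omega),
      Finset.sum_Ico_succ_top (by omega), Finset.Ico_add_one_right_eq_Icc]

lemma aux_one_step {F : Type*} [AddCommMonoid F] (f : ℕ → F) (n : ℕ) :
    ∑ k ∈ Finset.Icc 1 (n+1), f k = (∑ k ∈ Finset.Icc 1 n, f k) + f (n+1) := by
  rw [← Finset.Ico_add_one_right_eq_Icc 1 (n+1), Finset.sum_Ico_succ_top (by omega), Finset.Ico_add_one_right_eq_Icc]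

lemma aux_alt_split (F : Type*) [Field F] (m : ℕ) :
    (∑ k ∈ Finset.Icc 1 (2*m), (-1:F)^(k-1) * ((k:F))⁻¹)
      = (∑ k ∈ Finset.Icc 1 (2*m), ((k:F))⁻¹) - ∑ j ∈ Finset.Icc 1 m, 2 * ((2*j : ℕ) : F)⁻¹ := by
  induction m with
  | zero => simp
  | succ m ih =>
    have h1 : 2 * (m+1) = 2*m + 2 := by ring
    rw [h1, aux_two_step, aux_two_step, aux_one_step, ih]
    have e1 : ((-1:F))^(2*m+1-1) = 1 := by
      rw [show 2*m+1-1 = 2*m from rfl, pow_mul]; norm_num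
    have e2 : ((-1:F))^(2*m+2-1) = -1 := by
      rw [show 2*m+2-1 = 2*m+1 from rfl, pow_succ, pow_mul]; norm_num
    have e3 : ((2*(m+1) : ℕ) : F) = ((2*m+2 : ℕ) : F) := by norm_cast
    rw [e1, e2, e3]
    ring

lemma aux_binom (p : ℕ) (hp : p.Prime) (hp3 : 3 < p) :
    (∑ k ∈ Finset.Icc 1 (p-1), (-1:ZMod p)^(k-1) * ((k : ZMod p))⁻¹)
      = 2 * (((2 ^ (p - 1) - 1 : ℤ) / (p : ℤ) : ℤ) : ZMod p) := by
  haveI : Fact p.Prime := ⟨hp⟩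
  set q : ℤ := ((2 ^ (p - 1) - 1 : ℤ) / (p : ℤ)) with hqdef
  -- p divides 2^(p-1) - 1
  have h2ne : (2 : ZMod p) ≠ 0 := by
    have : ((2:ℕ) : ZMod p) ≠ 0 := by
      rw [Ne, ZMod.natCast_eq_zero_iff]
      intro h; have := Nat.le_of_dvd (by norm_num) h; omega
    simpa using this
  have hdvd : (p:ℤ) ∣ 2 ^ (p - 1) - 1 := by
    rw [← ZMod.intCast_zmod_eq_zero_iff_dvd]
    push_cast
    rw [ZMod.pow_card_sub_one_eq_one h2ne]
    ring
  have hq : (p:ℤ) * q = 2 ^ (p - 1) - 1 := Int.mul_ediv_cancel' hdvd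
  -- b k = choose p k / p
  set b : ℕ → ℕ := fun k => p.choose k / p with hbdef
  have hb : ∀ k ∈ Finset.Icc 1 (p-1), p * b k = p.choose k := by
    intro k hk
    simp only [Finset.mem_Icc] at hk
    exact Nat.mul_div_cancel' (hp.dvd_choose_self (by omega) (by omega))
  -- sum of choose = 2^p - 2
  have hsum : 2 + ∑ k ∈ Finset.Icc 1 (p-1), p.choose k = 2 ^ p := by
    have h0 : ∑ i ∈ Finset.range (p+1), p.choose i = 2 ^ p := Nat.sum_range_choose p
    rw [Finset.range_eq_Ico] at h0
    rw [Finset.sum_eq_sum_Ico_succ_bot (by omega)] at h0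
    rw [Finset.sum_Ico_succ_top (by omega)] at h0
    rw [show Finset.Ico 1 p = Finset.Icc 1 (p-1) by
      rw [← Finset.Ico_add_one_right_eq_Icc]; congr 1; omega] at h0
    simp only [Nat.choose_zero_right, Nat.choose_self] at h0
    omega
  -- p * A = 2^p - 2 in ℤ, hence A = 2q
  set A : ℕ := ∑ k ∈ Finset.Icc 1 (p-1), b k with hAdef
  have hpA : p * A = ∑ k ∈ Finset.Icc 1 (p-1), p.choose k := by
    rw [hAdef, Finset.mul_sum]
    exact Finset.sum_congr rfl hb
  have hA2q : (A : ℤ) = 2 * q := by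
    have h1 : (p:ℤ) * A = 2 ^ p - 2 := by
      have := hsum
      rw [← hpA] at this
      have h2 : (2:ℤ) + (p:ℤ) * (A:ℤ) = 2^p := by exact_mod_cast this
      linarith
    have h2 : (p:ℤ) * A = (p:ℤ) * (2 * q) := by
      rw [h1]
      have hp1 : (2:ℤ) ^ p = 2 * 2 ^ (p-1) := by
        rw [← pow_succ']
        congr 1; omega
      rw [hp1]
      linarith [hq]
    exact mul_left_cancel₀ (by exact_mod_cast hp.ne_zero) h2
  -- cast to ZMod p
  have hAz : ((A : ℕ) : ZMod p) = 2 * ((q : ℤ) : ZMod p) := by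
    have : (((A:ℤ)) : ZMod p) = ((2 * q : ℤ) : ZMod p) := by rw [hA2q]
    push_cast at this ⊢
    exact this
  -- termwise: b k = (-1)^(k-1) * k⁻¹ in ZMod p
  have hterm : ∀ k ∈ Finset.Icc 1 (p-1), ((b k : ℕ) : ZMod p) = (-1)^(k-1) * ((k : ZMod p))⁻¹ := by
    intro k hk
    simp only [Finset.mem_Icc] at hk
    have hkne : ((k : ZMod p)) ≠ 0 := by
      rw [Ne, ZMod.natCast_eq_zero_iff]
      intro h; have := Nat.le_of_dvd (by omega) h; omega
    -- p * C(p-1,k-1) = C(p,k) * k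
    have hid : p * Nat.choose (p-1) (k-1) = p.choose k * k := by
      have := Nat.add_one_mul_choose_eq (p-1) (k-1)
      have e1 : p-1+1 = p := by omega
      have e2 : k-1+1 = k := by omega
      rwa [e1, e2] at this
    have hbk : p * b k = p.choose k := hb k (by simp only [Finset.mem_Icc]; omega)
    have hid2 : Nat.choose (p-1) (k-1) = b k * k := by
      have : p * Nat.choose (p-1) (k-1) = p * (b k * k) := by
        rw [hid, ← hbk]; ring
      exact Nat.eq_of_mul_eq_mul_left hp.pos this
    have hcast : ((Nat.choose (p-1) (k-1) : ℕ) : ZMod p) = (b k : ZMod p) * (k : ZMod p) := by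
      rw [hid2]; push_cast; ring
    rw [aux_choose_neg_one p hp (k-1) (by omega)] at hcast
    field_simp at hcast ⊢
    linear_combination -hcast
  rw [← hAz, hAdef]
  push_cast
  exact (Finset.sum_congr rfl hterm).symm


theorem harmonic_half_eq_neg_two_fermat_quotient (p : ℕ) (hp : p.Prime) (hp3 : 3 < p) :
    (∑ k ∈ Finset.Icc 1 (p / 2), ((k : ZMod p))⁻¹)
      = -2 * (((2 ^ (p - 1) - 1 : ℤ) / (p : ℤ) : ℤ) : ZMod p) := by
  haveI : Fact p.Prime := ⟨hp⟩
  have hodd : p % 2 = 1 := Nat.odd_iff.mp (hp.odd_of_ne_two (by omega))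
  have hm : p - 1 = 2 * (p / 2) := by omega
  have h2ne : (2 : ZMod p) ≠ 0 := by
    have : ((2:ℕ) : ZMod p) ≠ 0 := by
      rw [Ne, ZMod.natCast_eq_zero_iff]
      intro h; have := Nat.le_of_dvd (by norm_num) h; omega
    simpa using this
  have halt := aux_alt_split (ZMod p) (p / 2)
  rw [← hm] at halt
  have hsum2 : (∑ j ∈ Finset.Icc 1 (p/2), 2 * ((2*j : ℕ) : ZMod p)⁻¹)
      = ∑ j ∈ Finset.Icc 1 (p/2), ((j : ZMod p))⁻¹ := by
    apply Finset.sum_congr rfl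
    intro j hj
    push_cast
    rw [mul_inv]
    exact mul_inv_cancel_left₀ h2ne _
  rw [hsum2, aux_binom p hp hp3, aux_harmonic_full p hp hp3] at halt
  linear_combination halt
end

section
/- For any prime p > 3, H_{⌊p/3⌋} ≡ -(3/2)·q_p(3) (mod p), where H_n = ∑_{k=1}^n 1/k in Z/pZ and q_p(3) = (3^{p-1}-1)/p. -/
lemma sum_range_cast {p : ℕ} [NeZero p] {M : Type*} [AddCommMonoid M] (g : ZMod p → M) :
    ∑ k ∈ Finset.range p, g k = ∑ x : ZMod p, g x := by
  refine Finset.sum_nbij' (fun k => (k : ZMod p)) (fun x => x.val) ?_ ?_ ?_ ?_ ?_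
  · intro a _; exact Finset.mem_univ _
  · intro x _; exact Finset.mem_range.2 (ZMod.val_lt x)
  · intro a ha; exact ZMod.val_natCast_of_lt (Finset.mem_range.1 ha)
  · intro x _; exact (ZMod.natCast_val x).trans (ZMod.cast_id _ _)
  · intro a _; rfl

lemma two_ne_zero_zmod (p : ℕ) (hp : p.Prime) (hp3 : 3 < p) : (2 : ZMod p) ≠ 0 := by
  haveI : Fact p.Prime := ⟨hp⟩
  have : ((2 : ℕ) : ZMod p) ≠ 0 := by
    rw [Ne, ZMod.natCast_eq_zero_iff]
    intro hd
    have := Nat.le_of_dvd (by norm_num) hd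
    omega
  simpa using this

lemma three_ne_zero_zmod (p : ℕ) (hp : p.Prime) (hp3 : 3 < p) : (3 : ZMod p) ≠ 0 := by
  haveI : Fact p.Prime := ⟨hp⟩
  have : ((3 : ℕ) : ZMod p) ≠ 0 := by
    rw [Ne, ZMod.natCast_eq_zero_iff]
    intro hd
    have := Nat.le_of_dvd (by norm_num) hd
    omega
  simpa using this

lemma sum_univ_zmod_zero (p : ℕ) (hp : p.Prime) (hp3 : 3 < p) :
    haveI : Fact p.Prime := ⟨hp⟩
    ∑ x : ZMod p, x = 0 := by
  haveI : Fact p.Prime := ⟨hp⟩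
  have h : ∑ x : ZMod p, x = ∑ x : ZMod p, -x :=
    Fintype.sum_equiv (Equiv.neg _) _ _ (fun x => by simp)
  have h2 : (2 : ZMod p) ≠ 0 := two_ne_zero_zmod p hp hp3
  have hsum : (2 : ZMod p) * ∑ x : ZMod p, x = 0 := by
    rw [two_mul]
    nth_rewrite 2 [h]
    simp [← Finset.sum_add_distrib]
  rcases mul_eq_zero.1 hsum with h' | h'
  · exact absurd h' h2
  · exact h'

lemma harmonic_full_zero (p : ℕ) (hp : p.Prime) (hp3 : 3 < p) :
    ∑ k ∈ Finset.Icc 1 (p - 1), ((k : ZMod p))⁻¹ = 0 := by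
  haveI : Fact p.Prime := ⟨hp⟩
  have hins : Finset.range p = insert 0 (Finset.Icc 1 (p - 1)) := by
    ext k; simp only [Finset.mem_range, Finset.mem_insert, Finset.mem_Icc]; omega
  have h0 : ∑ k ∈ Finset.range p, ((k : ZMod p))⁻¹ = ∑ k ∈ Finset.Icc 1 (p-1), ((k:ZMod p))⁻¹ := by
    rw [hins, Finset.sum_insert (by simp)]
    simp
  rw [← h0, sum_range_cast (fun x : ZMod p => x⁻¹)]
  have hinv : ∑ x : ZMod p, x⁻¹ = ∑ x : ZMod p, x :=
    Fintype.sum_equiv (Equiv.inv (ZMod p)) _ _ (fun x => by simp [Equiv.inv])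
  rw [hinv, sum_univ_zmod_zero p hp hp3]

open Finset in
lemma prod_add_eps {ι R : Type*} [DecidableEq ι] [CommRing R] (ε : R) (hε : ε * ε = 0)
    (s : Finset ι) (a b : ι → R) :
    ∏ i ∈ s, (a i + ε * b i)
      = (∏ i ∈ s, a i) + ε * ∑ i ∈ s, b i * ∏ j ∈ s.erase i, a j := by
  induction s using Finset.induction_on with
  | empty => simp
  | @insert x s hx ih =>
    rw [Finset.prod_insert hx, ih, Finset.prod_insert hx, Finset.sum_insert hx,
      Finset.erase_insert hx]
    have hsum : ∑ i ∈ s, b i * ∏ j ∈ (insert x s).erase i, a j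
        = a x * ∑ i ∈ s, b i * ∏ j ∈ s.erase i, a j := by
      rw [Finset.mul_sum]
      refine Finset.sum_congr rfl fun i hi => ?_
      rw [Finset.erase_insert_of_ne (by rintro rfl; exact hx hi),
        Finset.prod_insert (by simp only [Finset.mem_erase]; rintro ⟨-, h⟩; exact hx h)]
      ring
    rw [hsum]
    linear_combination b x * (∑ i ∈ s, b i * ∏ j ∈ s.erase i, a j) * hε

lemma cast_injOn_Icc (p : ℕ) [NeZero p] :
    Set.InjOn (fun k : ℕ => (k : ZMod p)) (Finset.Icc 1 (p-1)) := by
  intro a ha b hb hab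
  simp only [Finset.coe_Icc, Set.mem_Icc] at ha hb
  have hp : 0 < p := Nat.pos_of_ne_zero (NeZero.ne p)
  have := congrArg ZMod.val hab
  rwa [ZMod.val_natCast_of_lt (by omega), ZMod.val_natCast_of_lt (by omega)] at this

lemma prod_r (p : ℕ) (hp : p.Prime) (hp3 : 3 < p) :
    ∏ j ∈ Finset.Icc 1 (p-1), (3 * j % p) = Nat.factorial (p-1) := by
  haveI : Fact p.Prime := ⟨hp⟩
  have hmem : ∀ j ∈ Finset.Icc 1 (p-1), 3 * j % p ∈ Finset.Icc 1 (p-1) := by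
    intro j hj
    simp only [Finset.mem_Icc] at hj ⊢
    have hlt : 3 * j % p < p := Nat.mod_lt _ hp.pos
    have hne : 3 * j % p ≠ 0 := by
      intro h0
      have hdvd : p ∣ 3 * j := Nat.dvd_of_mod_eq_zero h0
      rcases (Nat.Prime.dvd_mul hp).1 hdvd with h | h
      · exact absurd (Nat.le_of_dvd (by norm_num) h) (by omega)
      · exact absurd (Nat.le_of_dvd (by omega) h) (by omega)
    omega
  have hinj : Set.InjOn (fun j : ℕ => 3 * j % p) (Finset.Icc 1 (p-1)) := by
    intro a ha b hb hab
    simp only at hab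
    have hc : ((3 * a : ℕ) : ZMod p) = ((3 * b : ℕ) : ZMod p) := by
      rw [← ZMod.natCast_mod (3*a) p, ← ZMod.natCast_mod (3*b) p, hab]
    push_cast at hc
    have h3 : (3 : ZMod p) ≠ 0 := by
      have : ((3 : ℕ) : ZMod p) ≠ 0 := by
        rw [Ne, ZMod.natCast_eq_zero_iff]
        intro hd; have := Nat.le_of_dvd (by norm_num) hd; omega
      simpa using this
    have hab' : (a : ZMod p) = (b : ZMod p) := mul_left_cancel₀ h3 hc
    exact cast_injOn_Icc p ha hb hab'
  have himg : Finset.image (fun j => 3 * j % p) (Finset.Icc 1 (p-1)) = Finset.Icc 1 (p-1) := by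
    apply Finset.eq_of_subset_of_card_le
    · intro x hx
      rcases Finset.mem_image.1 hx with ⟨j, hj, rfl⟩
      exact hmem j hj
    · rw [Finset.card_image_of_injOn hinj]
  have key : ∏ x ∈ Finset.image (fun j => 3 * j % p) (Finset.Icc 1 (p-1)), x
      = ∏ j ∈ Finset.Icc 1 (p-1), (3 * j % p) :=
    Finset.prod_image (fun a ha b hb => hinj ha hb)
  rw [← key, himg]
  have : Finset.Icc 1 (p-1) = Finset.Ico 1 (p-1+1) := by rw [Finset.Ico_add_one_right_eq_Icc]
  rw [this, Finset.prod_Ico_eq_prod_range]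
  simp only [Nat.add_sub_cancel]
  rw [← Finset.prod_range_add_one_eq_factorial]
  exact Finset.prod_congr rfl (fun i _ => by omega)

lemma prod_Icc_id (n : ℕ) : ∏ j ∈ Finset.Icc 1 n, j = Nat.factorial n := by
  have h : Finset.Icc 1 n = Finset.Ico 1 (n+1) := by rw [Finset.Ico_add_one_right_eq_Icc]
  rw [h, Finset.prod_Ico_eq_prod_range]
  simp only [Nat.add_sub_cancel]
  rw [← Finset.prod_range_add_one_eq_factorial]
  exact Finset.prod_congr rfl (fun i _ => by omega)

lemma fermat_quotient_core (p : ℕ) (hp : p.Prime) (hp3 : 3 < p) :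
    (((3 ^ (p - 1) - 1 : ℤ) / (p : ℤ) : ℤ) : ZMod p)
      = (3 : ZMod p)⁻¹ * ∑ j ∈ Finset.Icc 1 (p-1), ((3 * j / p : ℕ) : ZMod p) * ((j : ZMod p))⁻¹ := by
  haveI : Fact p.Prime := ⟨hp⟩
  set s := Finset.Icc 1 (p-1) with hs
  set q : ℤ := (3 ^ (p - 1) - 1 : ℤ) / (p : ℤ) with hqdef
  -- FLT divisibility
  have h3 : (3 : ZMod p) ≠ 0 := three_ne_zero_zmod p hp hp3
  have hflt : (3 : ZMod p) ^ (p - 1) = 1 := ZMod.pow_card_sub_one_eq_one h3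
  have hdvd : (p : ℤ) ∣ 3 ^ (p - 1) - 1 := by
    rw [← ZMod.intCast_zmod_eq_zero_iff_dvd]
    push_cast
    rw [hflt]; ring
  have hq : (3 : ℤ) ^ (p - 1) - 1 = (p : ℤ) * q := (Int.mul_ediv_cancel' hdvd).symm
  -- work in ZMod (p^2)
  set R := ZMod (p ^ 2) with hR
  have hε : ((p : R)) * (p : R) = 0 := by
    have : ((p ^ 2 : ℕ) : R) = 0 := ZMod.natCast_self _
    push_cast at this
    rwa [sq] at this
  set T : ℕ := ∑ j ∈ s, (3 * j / p) * ∏ i ∈ s.erase j, (3 * i % p) with hT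
  have hkey : ((3 ^ (p-1) * Nat.factorial (p-1) : ℕ) : R)
      = ((Nat.factorial (p-1) + p * T : ℕ) : R) := by
    have h1 : ∀ j ∈ s, ((3 * j : ℕ) : R) = ((3 * j % p : ℕ) : R) + (p : R) * ((3 * j / p : ℕ) : R) := by
      intro j _
      have := Nat.mod_add_div (3 * j) p
      calc ((3 * j : ℕ) : R) = ((3 * j % p + p * (3 * j / p) : ℕ) : R) := by rw [this]
        _ = _ := by push_cast [R]; ring
    have h2 : ∏ j ∈ s, ((3 * j : ℕ) : R)
        = ((∏ j ∈ s, (3 * j % p) : ℕ) : R)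
          + (p : R) * ∑ j ∈ s, ((3 * j / p : ℕ) : R) * ∏ i ∈ s.erase j, ((3 * i % p : ℕ) : R) := by
      rw [Finset.prod_congr rfl h1, prod_add_eps (p : R) hε s
        (fun j => ((3 * j % p : ℕ) : R)) (fun j => ((3 * j / p : ℕ) : R))]
      push_cast [R]
      ring
    have h3' : ∏ j ∈ s, ((3 * j : ℕ) : R) = ((3 ^ (p-1) * Nat.factorial (p-1) : ℕ) : R) := by
      rw [← Nat.cast_prod (R := ZMod (p ^ 2))]
      congr 1
      rw [Finset.prod_mul_distrib, Finset.prod_const, Nat.card_Icc, hs, prod_Icc_id,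
        Nat.add_sub_cancel]
    rw [← h3', h2, prod_r p hp hp3, hT]
    push_cast [R]
    ring
  -- derive the mod p congruence
  have hmod : (p : ℤ) ∣ (T : ℤ) - q * (Nat.factorial (p-1) : ℤ) := by
    have h := (Nat.modEq_iff_dvd).1 ((ZMod.natCast_eq_natCast_iff _ _ _).1 hkey)
    push_cast at h
    have heq : (Nat.factorial (p-1) : ℤ) + p * T - 3 ^ (p-1) * (Nat.factorial (p-1) : ℤ)
        = (p : ℤ) * ((T : ℤ) - q * (Nat.factorial (p-1) : ℤ)) := by
      linear_combination (-(Nat.factorial (p-1) : ℤ)) * hq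
    rw [heq] at h
    have hp0 : (p : ℤ) ≠ 0 := by exact_mod_cast hp.ne_zero
    rw [sq] at h
    exact (mul_dvd_mul_iff_left hp0).1 h
  have hTq : ((T : ℕ) : ZMod p) = (q : ZMod p) * ((Nat.factorial (p-1) : ℕ) : ZMod p) := by
    have := (ZMod.intCast_zmod_eq_zero_iff_dvd _ p).2 hmod
    push_cast at this ⊢
    linear_combination this
  -- compute T mod p
  have hTval : ((T : ℕ) : ZMod p)
      = -(3 : ZMod p)⁻¹ * ∑ j ∈ s, ((3 * j / p : ℕ) : ZMod p) * ((j : ZMod p))⁻¹ := by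
    have hall : ∏ i ∈ s, ((3 * i % p : ℕ) : ZMod p) = -1 := by
      rw [← Nat.cast_prod, prod_r p hp hp3, ZMod.wilsons_lemma]
    have hstep : ∀ j ∈ s, (((3 * j / p : ℕ) : ZMod p)) * ∏ i ∈ s.erase j, ((3 * i % p : ℕ) : ZMod p)
        = ((3 * j / p : ℕ) : ZMod p) * (-(3 : ZMod p)⁻¹ * ((j : ZMod p))⁻¹) := by
      intro j hj
      have hjne : ((j : ℕ) : ZMod p) ≠ 0 := by
        simp only [hs, Finset.mem_Icc] at hj
        intro h0
        rw [ZMod.natCast_eq_zero_iff] at h0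
        have := Nat.le_of_dvd (by omega) h0
        omega
      have hmul : ((3 * j % p : ℕ) : ZMod p) = 3 * (j : ZMod p) := by
        rw [ZMod.natCast_mod]; push_cast; ring
      have hne : (3 : ZMod p) * (j : ZMod p) ≠ 0 := mul_ne_zero h3 hjne
      have hprod : (3 * (j : ZMod p)) * ∏ i ∈ s.erase j, ((3 * i % p : ℕ) : ZMod p) = -1 := by
        rw [← hmul, Finset.mul_prod_erase s (fun i => ((3 * i % p : ℕ) : ZMod p)) hj, hall]
      have : ∏ i ∈ s.erase j, ((3 * i % p : ℕ) : ZMod p) = -(3 * (j : ZMod p))⁻¹ := by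
        field_simp at hprod ⊢
        linear_combination hprod
      rw [this, mul_inv]
      ring
    rw [hT]
    push_cast
    rw [Finset.sum_congr rfl hstep]
    rw [Finset.mul_sum]
    exact Finset.sum_congr rfl (fun j _ => by ring)
  rw [hTval] at hTq
  have hwilson : ((Nat.factorial (p-1) : ℕ) : ZMod p) = -1 := ZMod.wilsons_lemma p
  rw [hwilson] at hTq
  have := hTq.symm
  linear_combination -this

theorem harmonic_third_eq_fermat_quotient (p : ℕ) (hp : p.Prime) (hp3 : 3 < p) :
    (∑ k ∈ Finset.Icc 1 (p / 3), ((k : ZMod p))⁻¹)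
      = -(3 : ZMod p) * (2 : ZMod p)⁻¹ * (((3 ^ (p - 1) - 1 : ℤ) / (p : ℤ) : ℤ) : ZMod p) := by
  haveI : Fact p.Prime := ⟨hp⟩
  set n := p / 3 with hn
  set m := 2 * p / 3 with hm
  have hp30 : p % 3 ≠ 0 := by
    intro h
    have : (3 : ℕ) ∣ p := Nat.dvd_of_mod_eq_zero h
    rcases (Nat.Prime.eq_one_or_self_of_dvd hp 3 this) with h' | h' <;> omega
  have hor : p % 3 = 1 ∨ p % 3 = 2 := by omega
  have hnm : 0 < n ∧ n < m ∧ m < p - 1 ∧ n + m + 1 = p := by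
    constructor; · omega
    constructor; · omega
    constructor; · omega
    · omega
  -- sums over thirds
  set S1 := ∑ k ∈ Finset.Ioc 0 n, ((k : ZMod p))⁻¹ with hS1
  set S2 := ∑ k ∈ Finset.Ioc n m, ((k : ZMod p))⁻¹ with hS2
  set S3 := ∑ k ∈ Finset.Ioc m (p-1), ((k : ZMod p))⁻¹ with hS3
  have hIcc : ∀ b : ℕ, Finset.Icc 1 b = Finset.Ioc 0 b := by
    intro b; ext k; simp [Finset.mem_Icc, Finset.mem_Ioc]; omega
  -- full harmonic sum is zero
  have hfull : S1 + S2 + S3 = 0 := by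
    rw [hS1, hS2, hS3, Finset.sum_Ioc_consecutive _ (by omega : 0 ≤ n) (by omega : n ≤ m),
      Finset.sum_Ioc_consecutive _ (by omega : 0 ≤ m) (by omega : m ≤ p - 1), ← hIcc]
    exact harmonic_full_zero p hp hp3
  -- reflection: S3 = -S1
  have hrefl : S3 = -S1 := by
    rw [hS3, hS1, ← Finset.sum_neg_distrib]
    refine Finset.sum_nbij' (fun j => p - j) (fun j => p - j) ?_ ?_ ?_ ?_ ?_
    · intro a ha; simp only [Finset.mem_Ioc] at ha ⊢; omega
    · intro a ha; simp only [Finset.mem_Ioc] at ha ⊢; omega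
    · intro a ha; simp only [Finset.mem_Ioc] at ha; omega
    · intro a ha; simp only [Finset.mem_Ioc] at ha; omega
    · intro a ha
      simp only [Finset.mem_Ioc] at ha
      have hcast : ((p - a : ℕ) : ZMod p) = -(a : ZMod p) := by
        have : ((p - a : ℕ) : ZMod p) = (p : ZMod p) - (a : ZMod p) := by
          rw [Nat.cast_sub (by omega)]
        rw [this, ZMod.natCast_self]; ring
      rw [hcast, inv_neg, neg_neg]
  have hS2z : S2 = 0 := by
    have h := hfull
    rw [hrefl] at h
    linear_combination h
  -- evaluate the weighted sum from the core lemma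
  have hcore := fermat_quotient_core p hp hp3
  have hsplit : ∑ j ∈ Finset.Icc 1 (p-1), ((3 * j / p : ℕ) : ZMod p) * ((j : ZMod p))⁻¹
      = S2 + 2 * S3 := by
    rw [hIcc,
      ← Finset.sum_Ioc_consecutive (fun j : ℕ => ((3 * j / p : ℕ) : ZMod p) * ((j : ZMod p))⁻¹)
        (by omega : 0 ≤ m) (by omega : m ≤ p - 1),
      ← Finset.sum_Ioc_consecutive (fun j : ℕ => ((3 * j / p : ℕ) : ZMod p) * ((j : ZMod p))⁻¹)
        (by omega : 0 ≤ n) (by omega : n ≤ m)]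
    have hA : ∑ j ∈ Finset.Ioc 0 n, ((3 * j / p : ℕ) : ZMod p) * ((j : ZMod p))⁻¹ = 0 := by
      apply Finset.sum_eq_zero
      intro j hj
      simp only [Finset.mem_Ioc] at hj
      have : 3 * j / p = 0 := Nat.div_eq_of_lt (by omega)
      rw [this]; simp
    have hB : ∑ j ∈ Finset.Ioc n m, ((3 * j / p : ℕ) : ZMod p) * ((j : ZMod p))⁻¹ = S2 := by
      apply Finset.sum_congr rfl
      intro j hj
      simp only [Finset.mem_Ioc] at hj
      have : 3 * j / p = 1 :=
        Nat.div_eq_of_lt_le (by omega) (by omega)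
      rw [this]; simp
    have hC : ∑ j ∈ Finset.Ioc m (p-1), ((3 * j / p : ℕ) : ZMod p) * ((j : ZMod p))⁻¹
        = 2 * S3 := by
      rw [hS3, Finset.mul_sum]
      apply Finset.sum_congr rfl
      intro j hj
      simp only [Finset.mem_Ioc] at hj
      have : 3 * j / p = 2 :=
        Nat.div_eq_of_lt_le (by omega) (by omega)
      rw [this]; push_cast; ring
    rw [hA, hB, hC]; ring
  rw [hsplit, hS2z, hrefl] at hcore
  rw [hIcc, ← hS1, hcore]
  have h2 : (2 : ZMod p) ≠ 0 := two_ne_zero_zmod p hp hp3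
  have h3 : (3 : ZMod p) ≠ 0 := three_ne_zero_zmod p hp hp3
  field_simp
  ring
end

section
/- For any prime p > 3, H_{⌊p/6⌋} ≡ -2·q_p(2) - (3/2)·q_p(3) (mod p). -/
open Finset

/-- Fermat quotient as an integer. -/
def Qf (p : ℕ) (a : ℤ) : ℤ := (a ^ (p - 1) - 1) / (p : ℤ)

lemma qf_dvd {p : ℕ} (hp : p.Prime) {a : ℤ} (ha : ¬ (p:ℤ) ∣ a) :
    (p:ℤ) ∣ a ^ (p-1) - 1 := by
  haveI : Fact p.Prime := ⟨hp⟩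
  have h0 : (a : ZMod p) ≠ 0 := by rwa [Ne, ZMod.intCast_zmod_eq_zero_iff_dvd]
  have h1 : (a : ZMod p) ^ (p - 1) = 1 := ZMod.pow_card_sub_one_eq_one h0
  have h2 : ((a ^ (p-1) - 1 : ℤ) : ZMod p) = 0 := by push_cast [h1]; ring
  rwa [ZMod.intCast_zmod_eq_zero_iff_dvd] at h2

lemma qf_spec {p : ℕ} (hp : p.Prime) {a : ℤ} (ha : ¬ (p:ℤ) ∣ a) :
    a ^ (p-1) = 1 + (p:ℤ) * Qf p a := by
  have h := Int.mul_ediv_cancel' (qf_dvd hp ha)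
  rw [Qf]; omega

lemma qf_mul {p : ℕ} (hp : p.Prime) {a b : ℤ} (ha : ¬ (p:ℤ) ∣ a) (hb : ¬ (p:ℤ) ∣ b) :
    ((Qf p (a*b) : ℤ) : ZMod p) = (Qf p a : ZMod p) + (Qf p b : ZMod p) := by
  have hab : ¬ (p:ℤ) ∣ a * b := by
    intro h; rcases (Int.Prime.dvd_mul' (hp) h) with h' | h' <;> simp_all
  have hp0 : (p:ℤ) ≠ 0 := by exact_mod_cast hp.ne_zero
  have e2 : Qf p (a*b) = Qf p a + Qf p b + p * (Qf p a * Qf p b) := by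
    apply mul_left_cancel₀ hp0
    have h1 := qf_spec hp hab
    have h2 := qf_spec hp ha
    have h3 := qf_spec hp hb
    rw [mul_pow, h2, h3] at h1
    linear_combination -h1
  rw [e2]; push_cast; simp [ZMod.natCast_self]

lemma pow_add_sq (x y : ℤ) : ∀ n : ℕ, ∃ z : ℤ, (x+y)^(n+1) = x^(n+1) + ((n:ℤ)+1)*x^n*y + y^2*z
  | 0 => ⟨0, by ring⟩
  | n+1 => by
    obtain ⟨z, hz⟩ := pow_add_sq x y n
    refine ⟨x*z + ((n:ℤ)+1)*x^n + y*z, ?_⟩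
    have : (x+y)^(n+1+1) = (x+y)^(n+1) * (x+y) := by ring
    rw [this, hz]; push_cast; ring

lemma qf_shift {p : ℕ} (hp : p.Prime) {r f : ℤ} (hr : ¬ (p:ℤ) ∣ r) :
    ((Qf p (r + p*f) : ℤ) : ZMod p) = (Qf p r : ZMod p) - (f : ZMod p) * ((r : ZMod p))⁻¹ := by
  haveI : Fact p.Prime := ⟨hp⟩
  have h2 : 2 ≤ p := hp.two_le
  have hp0 : (p:ℤ) ≠ 0 := by exact_mod_cast hp.ne_zero
  have hn : p - 1 = (p-2) + 1 := by omega
  have hrf : ¬ (p:ℤ) ∣ (r + p*f) := by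
    intro h
    exact hr (by simpa using dvd_sub h (Dvd.intro f rfl))
  obtain ⟨z, hz⟩ := pow_add_sq r ((p:ℤ)*f) (p-2)
  have e1 := qf_spec hp hrf
  have e2 := qf_spec hp hr
  rw [hn] at e1 e2
  have key : Qf p (r + p*f) = Qf p r + (((p:ℤ)-2)+1) * r^(p-2) * f + (p:ℤ) * (f^2 * z) := by
    apply mul_left_cancel₀ hp0
    have hc : ((p-2 : ℕ) : ℤ) = (p:ℤ) - 2 := by omega
    rw [hc] at hz
    linear_combination hz - e1 + e2
  rw [key]
  have hr0 : (r : ZMod p) ≠ 0 := by rwa [Ne, ZMod.intCast_zmod_eq_zero_iff_dvd]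
  have h1 : ((r:ZMod p))^(p-2) * (r:ZMod p) = 1 := by
    rw [← pow_succ, ← hn, ZMod.pow_card_sub_one_eq_one hr0]
  have hinv : ((r : ZMod p))^(p-2) = ((r:ZMod p))⁻¹ := eq_inv_of_mul_eq_one_left h1
  push_cast
  rw [ZMod.natCast_self, hinv]
  ring

lemma qf_perk {p : ℕ} (hp : p.Prime) {a k : ℕ} (ha : ¬ p ∣ a) (hk1 : 0 < k) (hk2 : k < p) :
    ((Qf p ((a*k % p : ℕ) : ℤ) : ZMod p))
      = (Qf p (a : ℤ) : ZMod p) + (Qf p (k : ℤ) : ZMod p)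
        + ((a*k/p : ℕ) : ZMod p) * ((a : ZMod p) * (k : ZMod p))⁻¹ := by
  have hai : ¬ (p:ℤ) ∣ (a:ℤ) := by rwa [Int.natCast_dvd_natCast]
  have hk : ¬ p ∣ k := fun h => absurd (Nat.le_of_dvd hk1 h) (by omega)
  have hki : ¬ (p:ℤ) ∣ (k:ℤ) := by rwa [Int.natCast_dvd_natCast]
  have hak : ¬ p ∣ a * k := fun h => ((hp.dvd_mul.mp h).elim ha hk)
  have hr : ¬ (p:ℤ) ∣ ((a*k % p : ℕ) : ℤ) := by
    rw [Int.natCast_dvd_natCast]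
    intro h
    exact hak ((Nat.dvd_mod_iff dvd_rfl).mp h)
  have hdec : (a:ℤ) * (k:ℤ) = ((a*k % p : ℕ) : ℤ) + (p:ℤ) * ((a*k/p : ℕ) : ℤ) := by
    have hn : a * k = a*k % p + p * (a*k/p) := by
      have := Nat.div_add_mod (a*k) p; omega
    exact_mod_cast congrArg (fun x : ℕ => (x : ℤ)) hn
  have h1 := qf_mul hp hai hki
  have h2 := qf_shift hp (f := ((a*k/p : ℕ) : ℤ)) hr
  rw [← hdec] at h2
  have hcast : (((a*k % p : ℕ) : ℤ) : ZMod p) = (a : ZMod p) * (k : ZMod p) := by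
    push_cast [ZMod.natCast_mod]
    ring
  rw [h1, hcast] at h2
  rw [h2]
  simp only [Int.cast_natCast] at *
  ring

lemma lerch {p : ℕ} (hp : p.Prime) {a : ℕ} (ha : ¬ p ∣ a) :
    (a : ZMod p) * (Qf p (a : ℤ) : ZMod p)
      = ∑ k ∈ Ioc 0 (p-1), ((a*k/p : ℕ) : ZMod p) * ((k : ZMod p))⁻¹ := by
  haveI : Fact p.Prime := ⟨hp⟩
  have hp1 : 1 ≤ p := hp.one_lt.le
  have ha0 : (a : ZMod p) ≠ 0 := by
    rwa [Ne, ZMod.natCast_eq_zero_iff]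
  have eqofcast : ∀ x y : ℕ, x < p → y < p → ((x : ZMod p) = (y : ZMod p)) → x = y := by
    intro x y hx hy h
    rw [← ZMod.val_cast_of_lt hx, ← ZMod.val_cast_of_lt hy, h]
  set b : ℕ := ((a : ZMod p)⁻¹).val with hb
  have hbcast : (b : ZMod p) = (a : ZMod p)⁻¹ := by
    rw [hb, ZMod.natCast_val, ZMod.cast_id]
  have hmem : ∀ c : ℕ, ¬ p ∣ c → ∀ k ∈ Ioc 0 (p-1), c * k % p ∈ Ioc 0 (p-1) := by
    intro c hc k hk
    simp only [mem_Ioc] at hk ⊢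
    have hck : ¬ p ∣ c * k := fun h => ((hp.dvd_mul.mp h).elim hc
      (fun hd => absurd (Nat.le_of_dvd (by omega) hd) (by omega)))
    have : c * k % p ≠ 0 := fun h => hck ((Nat.dvd_mod_iff dvd_rfl).mp (h ▸ dvd_zero p))
    have := Nat.mod_lt (c*k) (by omega : 0 < p)
    omega
  have hpb : ¬ p ∣ b := by
    intro h
    have : (b : ZMod p) = 0 := by rwa [ZMod.natCast_eq_zero_iff]
    rw [hbcast, inv_eq_zero] at this
    exact ha0 this
  -- reindexing sum of Qf over residues
  have S1 : ∑ k ∈ Ioc 0 (p-1), ((Qf p ((a*k % p : ℕ) : ℤ) : ZMod p))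
      = ∑ k ∈ Ioc 0 (p-1), ((Qf p ((k : ℕ) : ℤ) : ZMod p)) := by
    refine Finset.sum_nbij' (fun k => a*k % p) (fun m => b*m % p)
      (hmem a ha) (hmem b hpb) ?_ ?_ ?_
    · intro k hk
      simp only [mem_Ioc] at hk
      apply eqofcast _ _ (Nat.mod_lt _ (by omega)) (by omega)
      push_cast [ZMod.natCast_mod]
      rw [← mul_assoc, hbcast, inv_mul_cancel₀ ha0, one_mul]
    · intro m hm
      simp only [mem_Ioc] at hm
      apply eqofcast _ _ (Nat.mod_lt _ (by omega)) (by omega)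
      push_cast [ZMod.natCast_mod]
      rw [← mul_assoc, mul_comm (a : ZMod p), hbcast, inv_mul_cancel₀ ha0, one_mul]
    · intro k hk
      rfl
  have key : ∀ k ∈ Ioc 0 (p-1),
      ((Qf p ((a*k % p : ℕ) : ℤ) : ZMod p)) - (Qf p ((k:ℕ) : ℤ) : ZMod p)
        = (Qf p (a : ℤ) : ZMod p)
          + ((a*k/p : ℕ) : ZMod p) * ((a : ZMod p) * (k : ZMod p))⁻¹ := by
    intro k hk
    simp only [mem_Ioc] at hk
    rw [qf_perk hp ha hk.1 (by omega)]
    ring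
  have hsum := Finset.sum_congr rfl key
  rw [Finset.sum_sub_distrib, S1, sub_self, Finset.sum_add_distrib, Finset.sum_const,
    Nat.card_Ioc] at hsum
  have hcard : (((p - 1 - 0 : ℕ)) • (Qf p (a:ℤ) : ZMod p)) = - (Qf p (a:ℤ) : ZMod p) := by
    rw [nsmul_eq_mul]
    have : ((p - 1 - 0 : ℕ) : ZMod p) = -1 := by
      push_cast [Nat.sub_zero, Nat.cast_sub hp1, ZMod.natCast_self]
      ring
    rw [this]; ring
  rw [hcard] at hsum
  have expand : ∀ k ∈ Ioc 0 (p-1),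
      ((a*k/p : ℕ) : ZMod p) * ((a : ZMod p) * (k : ZMod p))⁻¹
        = (a : ZMod p)⁻¹ * (((a*k/p : ℕ) : ZMod p) * ((k : ZMod p))⁻¹) := by
    intro k hk
    rw [mul_inv]
    ring
  rw [Finset.sum_congr rfl expand, ← Finset.mul_sum] at hsum
  have h3 : (Qf p (a:ℤ) : ZMod p)
      = (a : ZMod p)⁻¹ * ∑ k ∈ Ioc 0 (p-1), ((a*k/p : ℕ) : ZMod p) * ((k : ZMod p))⁻¹ := by
    linear_combination hsum
  rw [h3, ← mul_assoc, mul_inv_cancel₀ ha0, one_mul]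

section
variable {p : ℕ} (hp : p.Prime)

lemma cast_range_sum [NeZero p] (f : ZMod p → ZMod p) :
    ∑ k ∈ range p, f (k : ZMod p) = ∑ x : ZMod p, f x := by
  refine Finset.sum_nbij' (fun k => (k : ZMod p)) (fun x => x.val) ?_ ?_ ?_ ?_ ?_
  · intro k _; exact mem_univ _
  · intro x _; exact mem_range.mpr (ZMod.val_lt x)
  · intro k hk; exact ZMod.val_cast_of_lt (mem_range.mp hk)
  · intro x _; rw [ZMod.natCast_val, ZMod.cast_id]
  · intro k _; rfl

lemma hs_top (hp : p.Prime) (hodd : p ≠ 2) :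
    ∑ k ∈ Ioc 0 (p-1), ((k : ZMod p))⁻¹ = 0 := by
  haveI : Fact p.Prime := ⟨hp⟩
  have h2 : (2 : ZMod p) ≠ 0 := by
    have : ¬ p ∣ 2 := fun h => hodd ((Nat.prime_dvd_prime_iff_eq hp Nat.prime_two).mp h)
    rw [show (2 : ZMod p) = ((2:ℕ) : ZMod p) by push_cast; ring, Ne,
      ZMod.natCast_eq_zero_iff]
    exact this
  have e0 : Ioc 0 (p-1) = (range p).erase 0 := by
    ext k
    simp only [mem_Ioc, mem_erase, mem_range]
    have := hp.one_lt
    omega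
  rw [e0, Finset.sum_erase _ (by simp)]
  rw [cast_range_sum (fun x => x⁻¹)]
  have einv : ∑ x : ZMod p, x⁻¹ = ∑ x : ZMod p, x :=
    Fintype.sum_bijective Inv.inv inv_involutive.bijective _ _ (fun x => rfl)
  rw [einv]
  have ecast : ∑ x : ZMod p, x = ((∑ k ∈ range p, k : ℕ) : ZMod p) := by
    rw [← cast_range_sum (fun x => x), Nat.cast_sum]
  have h2s : (∑ x : ZMod p, x) * 2 = 0 := by
    rw [ecast, ← Nat.cast_ofNat (n := 2), ← Nat.cast_mul, Finset.sum_range_id_mul_two,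
      ZMod.natCast_eq_zero_iff]
    exact Dvd.intro _ rfl
  exact (mul_eq_zero.mp h2s).resolve_right h2

lemma hs_sym (hp : p.Prime) {n : ℕ} (hn : n ≤ p - 1) :
    ∑ k ∈ Ioc n (p-1), ((k : ZMod p))⁻¹ = - ∑ k ∈ Ioc 0 (p-1-n), ((k : ZMod p))⁻¹ := by
  haveI : Fact p.Prime := ⟨hp⟩
  have hp1 := hp.one_lt
  rw [← Finset.sum_neg_distrib]
  refine Finset.sum_nbij' (fun k => p - k) (fun k => p - k) ?_ ?_ ?_ ?_ ?_
  · intro k hk; simp only [mem_Ioc] at *; omega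
  · intro k hk; simp only [mem_Ioc] at *; omega
  · intro k hk; simp only [mem_Ioc] at hk; omega
  · intro k hk; simp only [mem_Ioc] at hk; omega
  · intro k hk
    simp only [mem_Ioc] at hk
    have : ((p - k : ℕ) : ZMod p) = -(k : ZMod p) := by
      rw [Nat.cast_sub (by omega), ZMod.natCast_self]; ring
    rw [this, inv_neg, neg_neg]
end

lemma piece_eval {p a j : ℕ} (lo hi : ℕ)
    (h : ∀ k, lo < k → k ≤ hi → j*p ≤ a*k ∧ a*k < (j+1)*p) :
    ∑ k ∈ Ioc lo hi, ((a*k/p : ℕ) : ZMod p) * ((k : ZMod p))⁻¹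
      = (j : ZMod p) * ∑ k ∈ Ioc lo hi, ((k : ZMod p))⁻¹ := by
  rw [Finset.mul_sum]
  refine Finset.sum_congr rfl ?_
  intro k hk
  simp only [mem_Ioc] at hk
  obtain ⟨h1, h2⟩ := h k hk.1 hk.2
  rw [Nat.div_eq_of_lt_le h1 h2]

theorem harmonic_sixth_eq_fermat_quotients (p : ℕ) (hp : p.Prime) (hp3 : 3 < p) :
    (∑ k ∈ Finset.Icc 1 (p / 6), ((k : ZMod p))⁻¹)
      = -2 * (((2 ^ (p - 1) - 1 : ℤ) / (p : ℤ) : ℤ) : ZMod p)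
        - (3 : ZMod p) * (2 : ZMod p)⁻¹ * (((3 ^ (p - 1) - 1 : ℤ) / (p : ℤ) : ℤ) : ZMod p) := by
  haveI : Fact p.Prime := ⟨hp⟩
  have hd2 : ¬ 2 ∣ p := fun h =>
    by have := (Nat.prime_dvd_prime_iff_eq Nat.prime_two hp).mp h; omega
  have hd3 : ¬ 3 ∣ p := fun h =>
    by have := (Nat.prime_dvd_prime_iff_eq Nat.prime_three hp).mp h; omega
  have hm2 : p % 2 = 1 := by omega
  have hm3 : p % 3 ≠ 0 := by omega
  have hp2 : ¬ p ∣ 2 := fun h => by have := Nat.le_of_dvd (by norm_num) h; omega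
  have hp3' : ¬ p ∣ 3 := fun h => by have := Nat.le_of_dvd (by norm_num) h; omega
  have hp6 : ¬ p ∣ 6 := fun h => by
    have h6 := Nat.le_of_dvd (by norm_num) h
    interval_cases p <;> omega
  -- the six interval sums
  set A1 := ∑ k ∈ Ioc 0 (p/6), ((k : ZMod p))⁻¹ with hA1
  set A2 := ∑ k ∈ Ioc (p/6) (p/3), ((k : ZMod p))⁻¹ with hA2
  set A3 := ∑ k ∈ Ioc (p/3) (p/2), ((k : ZMod p))⁻¹ with hA3
  set A4 := ∑ k ∈ Ioc (p/2) (2*p/3), ((k : ZMod p))⁻¹ with hA4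
  set A5 := ∑ k ∈ Ioc (2*p/3) (5*p/6), ((k : ZMod p))⁻¹ with hA5
  set A6 := ∑ k ∈ Ioc (5*p/6) (p-1), ((k : ZMod p))⁻¹ with hA6
  have dec : ∀ f : ℕ → ZMod p, ∑ k ∈ Ioc 0 (p-1), f k
      = ∑ k ∈ Ioc 0 (p/6), f k + (∑ k ∈ Ioc (p/6) (p/3), f k
        + (∑ k ∈ Ioc (p/3) (p/2), f k + (∑ k ∈ Ioc (p/2) (2*p/3), f k
        + (∑ k ∈ Ioc (2*p/3) (5*p/6), f k + ∑ k ∈ Ioc (5*p/6) (p-1), f k)))) := by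
    intro f
    rw [Finset.sum_Ioc_consecutive f (by omega : 2*p/3 ≤ 5*p/6) (by omega : 5*p/6 ≤ p-1),
      Finset.sum_Ioc_consecutive f (by omega : p/2 ≤ 2*p/3) (by omega : 2*p/3 ≤ p-1),
      Finset.sum_Ioc_consecutive f (by omega : p/3 ≤ p/2) (by omega : p/2 ≤ p-1),
      Finset.sum_Ioc_consecutive f (by omega : p/6 ≤ p/3) (by omega : p/3 ≤ p-1),
      Finset.sum_Ioc_consecutive f (by omega : 0 ≤ p/6) (by omega : p/6 ≤ p-1)]
  -- three Lerch evaluations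
  have E2 : (2 : ZMod p) * ((Qf p 2 : ℤ) : ZMod p) = A4 + A5 + A6 := by
    have l := lerch hp (a := 2) hp2
    rw [dec (fun k => ((2*k/p : ℕ) : ZMod p) * ((k : ZMod p))⁻¹)] at l
    rw [piece_eval (j := 0) _ _ (fun k h1 h2 => by omega),
      piece_eval (j := 0) _ _ (fun k h1 h2 => by omega),
      piece_eval (j := 0) _ _ (fun k h1 h2 => by omega),
      piece_eval (j := 1) _ _ (fun k h1 h2 => by omega),
      piece_eval (j := 1) _ _ (fun k h1 h2 => by omega),
      piece_eval (j := 1) _ _ (fun k h1 h2 => by omega)] at l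
    push_cast at l
    rw [hA4, hA5, hA6]
    linear_combination l
  have E3 : (3 : ZMod p) * ((Qf p 3 : ℤ) : ZMod p) = A3 + A4 + 2*A5 + 2*A6 := by
    have l := lerch hp (a := 3) hp3'
    rw [dec (fun k => ((3*k/p : ℕ) : ZMod p) * ((k : ZMod p))⁻¹)] at l
    rw [piece_eval (j := 0) _ _ (fun k h1 h2 => by omega),
      piece_eval (j := 0) _ _ (fun k h1 h2 => by omega),
      piece_eval (j := 1) _ _ (fun k h1 h2 => by omega),
      piece_eval (j := 1) _ _ (fun k h1 h2 => by omega),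
      piece_eval (j := 2) _ _ (fun k h1 h2 => by omega),
      piece_eval (j := 2) _ _ (fun k h1 h2 => by omega)] at l
    push_cast at l
    rw [hA3, hA4, hA5, hA6]
    linear_combination l
  have E6 : (6 : ZMod p) * (((Qf p 2 : ℤ) : ZMod p) + ((Qf p 3 : ℤ) : ZMod p))
      = A2 + 2*A3 + 3*A4 + 4*A5 + 5*A6 := by
    have l := lerch hp (a := 6) hp6
    rw [dec (fun k => ((6*k/p : ℕ) : ZMod p) * ((k : ZMod p))⁻¹)] at l
    rw [piece_eval (j := 0) _ _ (fun k h1 h2 => by omega),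
      piece_eval (j := 1) _ _ (fun k h1 h2 => by omega),
      piece_eval (j := 2) _ _ (fun k h1 h2 => by omega),
      piece_eval (j := 3) _ _ (fun k h1 h2 => by omega),
      piece_eval (j := 4) _ _ (fun k h1 h2 => by omega),
      piece_eval (j := 5) _ _ (fun k h1 h2 => by omega)] at l
    have hq6 : ((Qf p ((6:ℕ) : ℤ) : ℤ) : ZMod p)
        = ((Qf p 2 : ℤ) : ZMod p) + ((Qf p 3 : ℤ) : ZMod p) := by
      have := qf_mul hp (a := 2) (b := 3)
        (by rw [show (2:ℤ) = ((2:ℕ):ℤ) by norm_num, Int.natCast_dvd_natCast]; exact hp2)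
        (by rw [show (3:ℤ) = ((3:ℕ):ℤ) by norm_num, Int.natCast_dvd_natCast]; exact hp3')
      rw [show ((6:ℕ) : ℤ) = (2*3 : ℤ) by norm_num, this]
    rw [hq6] at l
    push_cast at l
    rw [hA2, hA3, hA4, hA5, hA6]
    linear_combination l
  have T : A1 + (A2 + (A3 + (A4 + (A5 + A6)))) = 0 := by
    rw [hA1, hA2, hA3, hA4, hA5, hA6, ← dec (fun k => ((k : ZMod p))⁻¹)]
    exact hs_top hp (by omega)
  have S : A6 = -A1 := by
    rw [hA6, hA1, hs_sym hp (by omega : 5*p/6 ≤ p-1), show p - 1 - 5*p/6 = p/6 by omega]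
  have h2 : (2 : ZMod p) ≠ 0 := by
    rw [show (2 : ZMod p) = ((2:ℕ) : ZMod p) by push_cast; ring, Ne,
      ZMod.natCast_eq_zero_iff]
    exact hp2
  have h2inv : (2 : ZMod p) * (2 : ZMod p)⁻¹ = 1 := mul_inv_cancel₀ h2
  have hA1e : (2 : ZMod p) * A1 = -(4 * ((Qf p 2 : ℤ) : ZMod p)) - 3 * ((Qf p 3 : ℤ) : ZMod p) := by
    linear_combination E6 - E3 - E2 + T + S
  have goal : A1 = -2 * ((Qf p 2 : ℤ) : ZMod p)
      - (3 : ZMod p) * (2 : ZMod p)⁻¹ * ((Qf p 3 : ℤ) : ZMod p) := by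
    apply mul_left_cancel₀ h2
    linear_combination hA1e + 3 * ((Qf p 3 : ℤ) : ZMod p) * h2inv
  rw [show Icc 1 (p/6) = Ioc 0 (p/6) from Finset.Icc_add_one_left_eq_Ioc 0 _, ← hA1]
  exact goal
end

section
/- For any prime p with p ≡ 1 (mod 3) and any integer k with (p-1)/2 ≥ k ≥ (p+2)/3, the Pochhammer ratio (1/3 - p/6)_k / (4/3 - 2p/3)_k ≡ -1/(2(3k+1)) (mod p), where both sides are viewed in Z_p. -/
open Finset

private lemma asc_eval_prod {R : Type*} [CommSemiring R] (x : R) :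
    ∀ n, (ascPochhammer R n).eval x = ∏ j ∈ range n, (x + j)
  | 0 => by simp
  | n+1 => by
    rw [ascPochhammer_succ_right, Polynomial.eval_mul, asc_eval_prod x n, prod_range_succ]
    simp

private lemma key_nat (k m : ℕ) (h1 : 1 ≤ m) (h2 : m < k) :
    (3*k+1) * ∏ j ∈ (range k).erase m, (3*j+1)
      = ∏ j ∈ (range k).erase (m-1), (3*j+4) := by
  have hmap : ((range k).erase (m-1)).image (· + 1) = ((range (k+1)).erase m).erase 0 := by
    ext x
    simp only [mem_image, mem_erase, mem_range]
    constructor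
    · rintro ⟨a, ⟨ha1, ha2⟩, rfl⟩; omega
    · rintro ⟨hx0, hxm, hxk⟩; exact ⟨x-1, ⟨by omega, by omega⟩, by omega⟩
  have hinj : Set.InjOn (· + 1) ((range k).erase (m-1)) := (add_left_injective 1).injOn
  have hrhs : ∏ j ∈ (range k).erase (m-1), (3*j+4)
      = ∏ x ∈ ((range (k+1)).erase m).erase 0, (3*x+1) := by
    rw [← hmap, prod_image hinj]
    exact prod_congr rfl fun j _ => by ring
  rw [hrhs, Finset.prod_erase (f := fun x => 3*x+1) ((range (k+1)).erase m) (by norm_num)]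
  have : (range (k+1)).erase m = insert k ((range k).erase m) := by
    rw [range_add_one, Finset.erase_insert_of_ne (by omega)]
  rw [this, prod_insert (by simp)]

private lemma nat_not_dvd {p n : ℕ} (hp : 0 < p) (h1 : 0 < n) (h2 : n < 3*p)
    (h3 : n ≠ p) (h4 : n ≠ 2*p) : ¬ p ∣ n := by
  rintro ⟨c, rfl⟩
  have h5 : c < 3 := by
    by_contra h
    push_neg at h
    have := Nat.mul_le_mul_left p h
    omega
  interval_cases c <;> omega

theorem pochhammer_ratio_mod_p (p : ℕ) [hp : Fact p.Prime] (h3 : p % 3 = 1) (k : ℕ)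
    (hk1 : (p + 2) / 3 ≤ k) (hk2 : k ≤ (p - 1) / 2) :
    ‖(ascPochhammer ℚ_[p] k).eval ((1 : ℚ_[p]) / 3 - (p : ℚ_[p]) / 6)
        / (ascPochhammer ℚ_[p] k).eval ((4 : ℚ_[p]) / 3 - 2 * (p : ℚ_[p]) / 3)
      - (-(1 / (2 * (3 * (k : ℚ_[p]) + 1))))‖ ≤ (p : ℝ)⁻¹ := by
  have hp' := hp.out
  have hp2 : 2 ≤ p := hp'.two_le
  have hodd : p % 2 = 1 := hp'.eq_two_or_odd.resolve_left (by omega)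
  set t := p / 3 with ht
  have hpt : p = 3*t+1 := by omega
  have ht2 : 2 ≤ t := by omega
  have hk1' : t + 1 ≤ k := by omega
  have hk2' : 2*k ≤ 3*t := by omega
  -- integer products
  set N : ℤ := ∏ j ∈ range k, (6*(j:ℤ)+2-p) with hN
  set M : ℤ := ∏ j ∈ range k, (3*(j:ℤ)+4-2*p) with hM
  set N' : ℤ := ∏ j ∈ (range k).erase t, (6*(j:ℤ)+2-p) with hN'
  set M' : ℤ := ∏ j ∈ (range k).erase (t-1), (3*(j:ℤ)+4-2*p) with hM'
  have hNsplit : N = p * N' := by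
    rw [hN, hN', ← Finset.mul_prod_erase _ _ (by simp; omega : t ∈ range k)]
    congr 1
    omega
  have hMsplit : M = -p * M' := by
    rw [hM, hM', ← Finset.mul_prod_erase _ _ (by simp; omega : t - 1 ∈ range k)]
    congr 1
    push_cast [show (1:ℕ) ≤ t by omega]
    omega
  -- eval formulas
  have hPev : (ascPochhammer ℚ_[p] k).eval ((1 : ℚ_[p]) / 3 - (p : ℚ_[p]) / 6)
      = (N : ℚ_[p]) / 6^k := by
    rw [asc_eval_prod, hN]
    push_cast
    rw [show ((6:ℚ_[p]))^k = ∏ _j ∈ range k, (6:ℚ_[p]) by rw [prod_const, card_range],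
      ← prod_div_distrib]
    refine prod_congr rfl fun j _ => ?_
    have h6 : (6:ℚ_[p]) ≠ 0 := by norm_num
    field_simp; ring
  have hQev : (ascPochhammer ℚ_[p] k).eval ((4 : ℚ_[p]) / 3 - 2 * (p : ℚ_[p]) / 3)
      = (M : ℚ_[p]) / 3^k := by
    rw [asc_eval_prod, hM]
    push_cast
    rw [show ((3:ℚ_[p]))^k = ∏ _j ∈ range k, (3:ℚ_[p]) by rw [prod_const, card_range],
      ← prod_div_distrib]
    refine prod_congr rfl fun j _ => ?_
    have h6 : (3:ℚ_[p]) ≠ 0 := by norm_num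
    field_simp; ring
  -- the key congruence mod p
  have hcong : (p:ℤ) ∣ (2*(3*k+1)* N' - 2^k * M') := by
    rw [← ZMod.intCast_zmod_eq_zero_iff_dvd]
    push_cast [hN', hM']
    simp only [ZMod.natCast_self, sub_zero, mul_zero]
    have hA : ∏ x ∈ (range k).erase t, (6*(x:ZMod p)+2)
        = 2^(k-1) * ∏ x ∈ (range k).erase t, (3*(x:ZMod p)+1) := by
      calc ∏ x ∈ (range k).erase t, (6*(x:ZMod p)+2)
          = ∏ x ∈ (range k).erase t, (2*(3*(x:ZMod p)+1)) :=
            prod_congr rfl fun x _ => by ring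
        _ = (∏ _x ∈ (range k).erase t, (2:ZMod p))
            * ∏ x ∈ (range k).erase t, (3*(x:ZMod p)+1) := prod_mul_distrib
        _ = 2^(k-1) * ∏ x ∈ (range k).erase t, (3*(x:ZMod p)+1) := by
            rw [prod_const, card_erase_of_mem (by simp; omega), card_range]
    have hK : (3*(k:ZMod p)+1) * ∏ x ∈ (range k).erase t, (3*(x:ZMod p)+1)
        = ∏ x ∈ (range k).erase (t-1), (3*(x:ZMod p)+4) := by
      have h := congrArg (fun n : ℕ => (n : ZMod p)) (key_nat k t (by omega) (by omega))
      push_cast at h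
      exact h
    rw [hA, ← hK]
    have h2 : (2:ZMod p) * 2^(k-1) = 2^k := by
      rw [← pow_succ']
      congr 1
      omega
    linear_combination ((3*(k:ZMod p)+1) * (∏ x ∈ (range k).erase t, (3*(x:ZMod p)+1))) * h2
  obtain ⟨c, hc⟩ := hcong
  -- numerator divisible by p^2
  set a : ℤ := 2*(3*k+1)*N + 2^k*M with ha
  set b : ℤ := 2^(k+1)*(3*k+1)*M with hb
  have hpa : (p:ℤ)^2 ∣ a := ⟨c, by rw [ha, hNsplit, hMsplit]; linear_combination (p:ℤ) * hc⟩
  -- unit part of b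
  set u : ℤ := -(2^(k+1)*(3*k+1)*M') with hu
  have hbu : b = p * u := by rw [hb, hu, hMsplit]; ring
  have hM'unit : ¬ (p:ℤ) ∣ u := by
    rw [← ZMod.intCast_zmod_eq_zero_iff_dvd]
    push_cast [hu, hM']
    simp only [ZMod.natCast_self, mul_zero, sub_zero]
    intro h
    rw [neg_eq_zero] at h
    rcases mul_eq_zero.mp h with h' | h'
    · rcases mul_eq_zero.mp h' with h'' | h''
      · have h20 : (2:ZMod p) ≠ 0 := by
          have : ((2:ℕ) : ZMod p) ≠ 0 := by
            rw [Ne, ZMod.natCast_eq_zero_iff]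
            exact nat_not_dvd (by omega) (by omega) (by omega) (by omega) (by omega)
          simpa using this
        exact h20 (pow_eq_zero_iff (by omega) |>.mp h'')
      · have : ((3*k+1:ℕ) : ZMod p) ≠ 0 := by
          rw [Ne, ZMod.natCast_eq_zero_iff]
          exact nat_not_dvd (by omega) (by omega) (by omega) (by omega) (by omega)
        apply this
        push_cast
        exact h''
    · obtain ⟨x, hx, hx0⟩ := prod_eq_zero_iff.mp h'
      simp only [mem_erase, mem_range] at hx
      have : ((3*x+4:ℕ) : ZMod p) ≠ 0 := by
        rw [Ne, ZMod.natCast_eq_zero_iff]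
        exact nat_not_dvd (by omega) (by omega) (by omega) (by omega) (by omega)
      apply this
      push_cast
      exact hx0
  have hunorm : ‖(u:ℚ_[p])‖ = 1 := by
    rcases (Padic.norm_int_le_one (p := p) u).lt_or_eq with h | h
    · exact absurd ((Padic.norm_intCast_lt_one_iff (k := u)).mp h) hM'unit
    · exact h
  have hbnorm : ‖(b:ℚ_[p])‖ = (p:ℝ)⁻¹ := by
    rw [hbu]
    push_cast
    rw [norm_mul, hunorm, Padic.norm_p, mul_one]
  -- nonvanishing for field_simp
  have hMne : M ≠ 0 := by
    rw [hM]
    refine prod_ne_zero_iff.mpr fun j hj => ?_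
    omega
  have hMcast : (M:ℚ_[p]) ≠ 0 := Int.cast_ne_zero.mpr hMne
  have h3k : (3*(k:ℚ_[p])+1) ≠ 0 := by
    have h0 : ((3*k+1:ℕ) : ℚ_[p]) ≠ 0 := Nat.cast_ne_zero.mpr (by omega)
    push_cast at h0
    exact h0
  have h2ne : (2:ℚ_[p]) ≠ 0 := by norm_num
  have h3ne : (3:ℚ_[p]) ≠ 0 := by norm_num
  have h6ne : (6:ℚ_[p]) ≠ 0 := by norm_num
  have hΔ : (ascPochhammer ℚ_[p] k).eval ((1 : ℚ_[p]) / 3 - (p : ℚ_[p]) / 6)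
        / (ascPochhammer ℚ_[p] k).eval ((4 : ℚ_[p]) / 3 - 2 * (p : ℚ_[p]) / 3)
      - (-(1 / (2 * (3 * (k : ℚ_[p]) + 1)))) = (a:ℚ_[p]) / (b:ℚ_[p]) := by
    rw [hPev, hQev, ha, hb]
    push_cast
    rw [show (6:ℚ_[p])^k = 2^k*3^k by rw [← mul_pow]; norm_num, pow_succ]
    have h2k : (2:ℚ_[p])^k ≠ 0 := pow_ne_zero _ h2ne
    have h3kp : (3:ℚ_[p])^k ≠ 0 := pow_ne_zero _ h3ne
    field_simp
    ring
  rw [hΔ, norm_div, hbnorm]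
  have hanorm : ‖(a:ℚ_[p])‖ ≤ (p:ℝ)^(-(2:ℕ):ℤ) :=
    (Padic.norm_int_le_pow_iff_dvd a 2).mpr (by exact_mod_cast hpa)
  have hp0 : (0:ℝ) < p := by positivity
  rw [div_le_iff₀ (by positivity)]
  refine hanorm.trans_eq ?_
  rw [show (-(2:ℕ):ℤ) = (-1) + (-1) by norm_num, zpow_add₀ (ne_of_gt hp0), zpow_neg_one]
end
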